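/- arXiv:2410.22703 — 3 statements merged into one kernel-verified Lean document; each statement's English description precedes it below -/
import Mathlib

section
/- Let E_1, …, E_n be i.i.d. rate-1 exponential random variables and fix i ∈ {1,…,n}. Then for every ε > 0: if ε ≤ 2i·Σ_{j=i}^n j^{−2}, then P(|Σ_{j=i}^n (E_j − 1)/j| > ε) ≤ 2·exp(−ε² / (8·Σ_{j=i}^n j^{−2})); and if ε > 2i·Σ_{j=i}^n j^{−2}, then P(|Σ_{j=i}^n (E_j − 1)/j| > ε) ≤ 2·exp(−iε/4). -/
open MeasureTheory ProbabilityTheory Filter Real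

noncomputable section

/-- `F` is a continuous CDF supported on `(0, ∞)`. -/
def IsCDF (F : ℝ → ℝ) : Prop :=
  Monotone F ∧ Continuous F ∧ (∀ x ≤ (0:ℝ), F x = 0) ∧ Tendsto F atTop (nhds 1)

/-- Generalized inverse `F^←(y) = inf {x | F x ≥ y}`. -/
noncomputable def Finv (F : ℝ → ℝ) (y : ℝ) : ℝ := sInf {x | y ≤ F x}

/-- `U(t) = F^←(1 - 1/t)`. -/
noncomputable def Ufun (F : ℝ → ℝ) (t : ℝ) : ℝ := Finv F (1 - 1/t)

/-- Condition (RV): regular variation of `U` with index `γ = 1/α`. -/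
def CondRV (F : ℝ → ℝ) (α : ℝ) : Prop :=
  ∀ x : ℝ, 0 < x →
    Tendsto (fun t => Ufun F (t * x) / Ufun F t) atTop (nhds (x ^ (1/α)))

/-- Condition (UL) with parameters `t₀` and `η`. -/
def CondUL (F : ℝ → ℝ) (α t₀ η : ℝ) : Prop :=
  0 < t₀ ∧ 0 ≤ η ∧ η < 1 ∧
  ∀ t ≥ t₀, ∀ x ≥ (1:ℝ), (1 - η) * x ^ (1/α) + η ≤ Ufun F (t * x) / Ufun F t

variable {Ω : Type*} [mΩ : MeasurableSpace Ω]

/-- `W 1, W 2, …` are i.i.d. with distribution function `F`. -/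
def IIDWith (P : Measure Ω) (F : ℝ → ℝ) (W : ℕ → Ω → ℝ) : Prop :=
  (∀ i, Measurable (W i)) ∧
  iIndepFun W P ∧
  ∀ i (x : ℝ), P {ω | W i ω ≤ x} = ENNReal.ofReal (F x)

/-- `Wo n 1 ≥ Wo n 2 ≥ … ≥ Wo n n` are the decreasing order statistics of `W 1, …, W n`. -/
def IsOrderStats (W : ℕ → Ω → ℝ) (Wo : ℕ → ℕ → Ω → ℝ) : Prop :=
  (∀ n i, Measurable (Wo n i)) ∧
  (∀ n (ω : Ω), ∀ i ∈ Finset.Icc 1 n, ∀ j ∈ Finset.Icc 1 n, i ≤ j → Wo n j ω ≤ Wo n i ω) ∧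
  (∀ n (ω : Ω), (Finset.Icc 1 n).val.map (fun i => Wo n i ω)
      = (Finset.Icc 1 n).val.map (fun i => W i ω))

/-- The σ-algebra generated by the order statistics `(Wo n 1, …, Wo n n)`. -/
def weightSigma (Wo : ℕ → ℕ → Ω → ℝ) (n : ℕ) : MeasurableSpace Ω :=
  MeasurableSpace.comap (fun ω (i : Fin n) => Wo n ((i : ℕ) + 1) ω) inferInstance

/-- Norros–Reittu degree hypothesis: conditionally on the weights, `D n i` is Poisson
with mean `Wo n i`. -/
def NorrosReittu (P : Measure Ω) (Wo : ℕ → ℕ → Ω → ℝ) (D : ℕ → ℕ → Ω → ℕ) : Prop :=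
  (∀ n i, Measurable (D n i)) ∧
  ∀ n, ∀ i ∈ Finset.Icc 1 n, ∀ k : ℕ,
    (P[Set.indicator {ω | D n i ω = k} (fun _ => (1:ℝ)) | weightSigma Wo n]) =ᵐ[P]
      fun ω => Real.exp (-(Wo n i ω)) * (Wo n i ω)^k / (Nat.factorial k)

/-- Chung–Lu degree hypothesis. -/
def ChungLu (P : Measure Ω) [IsFiniteMeasure P] [StandardBorelSpace Ω]
    (W : ℕ → Ω → ℝ) (Wo : ℕ → ℕ → Ω → ℝ)
    (A : ℕ → ℕ → ℕ → Ω → ℕ) (D : ℕ → ℕ → Ω → ℕ) : Prop :=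
  (∀ n i j, Measurable (A n i j)) ∧
  (∀ n i j (ω : Ω), A n i j ω ≤ 1) ∧
  (∀ n i j (ω : Ω), A n j i ω = A n i j ω) ∧
  (∀ n i (ω : Ω), D n i ω = ∑ j ∈ Finset.Icc 1 n, A n i j ω) ∧
  (∀ n (hle : weightSigma Wo n ≤ mΩ),
    iCondIndepFun (weightSigma Wo n) hle
      (fun (p : {p : ℕ × ℕ // p.1 ∈ Finset.Icc 1 n ∧ p.2 ∈ Finset.Icc 1 n ∧ p.1 ≤ p.2})
        (ω : Ω) => A n p.1.1 p.1.2 ω) P) ∧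
  (∀ n, ∀ i ∈ Finset.Icc 1 n, ∀ j ∈ Finset.Icc 1 n, i ≤ j →
    (P[Set.indicator {ω | A n i j ω = 1} (fun _ => (1:ℝ)) | weightSigma Wo n]) =ᵐ[P]
      fun ω => min (Wo n i ω * Wo n j ω / (∑ l ∈ Finset.Icc 1 n, W l ω)) 1)

/-- Decreasing order statistics for natural-number-valued degree sequences. -/
def IsOrderStatsN (D : ℕ → ℕ → Ω → ℕ) (Do : ℕ → ℕ → Ω → ℕ) : Prop :=
  (∀ n (ω : Ω), ∀ i ∈ Finset.Icc 1 n, ∀ j ∈ Finset.Icc 1 n, i ≤ j → Do n j ω ≤ Do n i ω) ∧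
  (∀ n (ω : Ω), (Finset.Icc 1 n).val.map (fun i => Do n i ω)
      = (Finset.Icc 1 n).val.map (fun i => D n i ω))

namespace Stmt2Aux
open Set
open scoped ENNReal NNReal


variable {Ω : Type*} [mΩ : MeasurableSpace Ω]

lemma law_exp (P : Measure Ω) [IsProbabilityMeasure P] (X : Ω → ℝ)
    (hm : Measurable X)
    (hdist : ∀ x : ℝ, 0 ≤ x → P {ω | x < X ω} = ENNReal.ofReal (Real.exp (-x))) :
    P.map X = expMeasure 1 := by
  have : IsProbabilityMeasure (expMeasure 1) := by exact isProbabilityMeasure_gammaMeasure zero_lt_one one_pos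
  haveI : IsProbabilityMeasure (P.map X) := Measure.isProbabilityMeasure_map hm.aemeasurable
  refine MeasureTheory.Measure.ext_of_Iic _ _ (fun a => ?_)
  rw [Measure.map_apply hm measurableSet_Iic]
  have hright : expMeasure 1 (Iic a) = ENNReal.ofReal (if 0 ≤ a then 1 - exp (-(1*a)) else 0) := by
    rw [← lintegral_exponentialPDF_eq_antiDeriv one_pos a, expMeasure, gammaMeasure,
      withDensity_apply _ measurableSet_Iic]
    rfl
  have hcompl : X ⁻¹' (Iic a) = {ω | a < X ω}ᶜ := by
    ext ω; simp [not_lt]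
  rcases le_or_gt 0 a with h0 | h0
  · rw [hcompl, measure_compl (measurableSet_lt measurable_const hm) (measure_ne_top _ _),
      hdist a h0, hright, if_pos h0, measure_univ]
    rw [ENNReal.ofReal_sub _ (exp_pos _).le]
    simp
  · have h1 : X ⁻¹' (Iic a) ⊆ {ω | 0 < X ω}ᶜ := by
      intro ω hω; simp only [mem_preimage, mem_Iic] at hω
      simp only [mem_compl_iff, mem_setOf_eq, not_lt]; linarith
    have h2 : P {ω | 0 < X ω}ᶜ = 0 := by
      rw [measure_compl (measurableSet_lt measurable_const hm) (measure_ne_top _ _),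
        hdist 0 le_rfl, measure_univ]
      simp
    rw [hright, if_neg (not_le.2 h0)]
    simpa using measure_mono_null h1 h2

lemma expMeasure_as_withDensity :
    expMeasure 1 = volume.withDensity
      (fun x => ((Real.toNNReal (exponentialPDFReal 1 x) : ℝ≥0) : ℝ≥0∞)) := by
  rfl

lemma integrand_eq (u : ℝ) (x : ℝ) :
    ((Real.toNNReal (exponentialPDFReal 1 x) : ℝ)) * exp (u * x)
      = Set.indicator (Ici (0:ℝ)) (fun x => exp (-(1 - u) * x)) x := by
  rw [Real.coe_toNNReal _ (exponentialPDFReal_nonneg one_pos x)]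
  unfold exponentialPDFReal gammaPDFReal
  simp only [Set.indicator, mem_Ici]
  rcases le_or_gt 0 x with h | h
  · rw [if_pos h, if_pos h, Real.Gamma_one]
    simp only [one_rpow, sub_self, Real.rpow_zero, one_div, inv_one, one_mul, mul_one]
    rw [← exp_add]; ring_nf
  · rw [if_neg (not_le.2 h), if_neg (not_le.2 h)]; ring

lemma integrable_exp_mul_expMeasure {u : ℝ} (hu : u < 1) :
    Integrable (fun x => exp (u * x)) (expMeasure 1) := by
  rw [expMeasure_as_withDensity]
  rw [integrable_withDensity_iff (by measurability) (ae_of_all _ fun x => ENNReal.coe_lt_top)]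
  have : (fun x => exp (u * x) * ((Real.toNNReal (exponentialPDFReal 1 x) : ℝ≥0) : ℝ))
      = Set.indicator (Ici (0:ℝ)) (fun x => exp (-(1 - u) * x)) := by
    ext x; rw [mul_comm]; exact integrand_eq u x
  simp only [ENNReal.coe_toReal]
  rw [this]
  rw [integrable_indicator_iff measurableSet_Ici, integrableOn_Ici_iff_integrableOn_Ioi]
  exact exp_neg_integrableOn_Ioi 0 (by linarith)

lemma integral_exp_mul_expMeasure {u : ℝ} (hu : u < 1) :
    ∫ x, exp (u * x) ∂(expMeasure 1) = (1 - u)⁻¹ := by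
  rw [expMeasure_as_withDensity,
    integral_withDensity_eq_integral_smul (by measurability) (fun x => exp (u * x))]
  have : (fun x => (Real.toNNReal (exponentialPDFReal 1 x)) • exp (u * x))
      = Set.indicator (Ici (0:ℝ)) (fun x => exp (-(1 - u) * x)) := by
    ext x; rw [NNReal.smul_def, smul_eq_mul]; exact integrand_eq u x
  rw [this, integral_indicator measurableSet_Ici, integral_Ici_eq_integral_Ioi]
  have h1 : (0:ℝ) < 1 - u := by linarith
  have := integral_comp_mul_left_Ioi (fun x => exp (-x)) 0 h1
  simp only [mul_zero, ← neg_mul] at this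
  rw [this, integral_exp_neg_Ioi, smul_eq_mul]
  simp

lemma exp_inv_bound {u : ℝ} (h : |u| ≤ 1/2) : exp (-u) * (1 - u)⁻¹ ≤ exp (2 * u^2) := by
  rw [abs_le] at h
  have h1 : 0 < 1 - u := by linarith
  have hlog := Real.log_le_sub_one_of_pos (inv_pos.2 h1)
  have h2 : (1 - u)⁻¹ ≤ exp ((1 - u)⁻¹ - 1) :=
    (Real.exp_log (inv_pos.2 h1)).symm.trans_le (exp_le_exp.2 hlog)
  calc exp (-u) * (1 - u)⁻¹ ≤ exp (-u) * exp ((1 - u)⁻¹ - 1) :=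
        mul_le_mul_of_nonneg_left h2 (exp_pos _).le
    _ = exp (-u + ((1 - u)⁻¹ - 1)) := (exp_add _ _).symm
    _ ≤ exp (2 * u^2) := by
        apply exp_le_exp.2
        have hinv : (1 - u)⁻¹ - 1 = u / (1 - u) := by field_simp; ring
        have h3 : u / (1 - u) ≤ u + 2 * u^2 := by
          rw [div_le_iff₀ h1]
          nlinarith [mul_nonneg (sq_nonneg u) (by linarith : (0:ℝ) ≤ 1 - 2*u)]
        rw [hinv]; linarith

/-- The one-sided Chernoff tail bound. -/
lemma tail_bound (P : Measure Ω) [IsProbabilityMeasure P] (E : ℕ → Ω → ℝ)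
    (hmeas : ∀ j, Measurable (E j))
    (hindep : iIndepFun E P)
    (hdist : ∀ j, ∀ x : ℝ, 0 ≤ x → P {ω | x < E j ω} = ENNReal.ofReal (Real.exp (-x)))
    (n i : ℕ) (h1i : 1 ≤ i) (σ : ℝ) (hσ : σ = 1 ∨ σ = -1)
    (lam ε : ℝ) (hl0 : 0 ≤ lam) (hli : 2 * lam ≤ i) :
    P {ω | ε ≤ ∑ j ∈ Finset.Icc i n, σ * ((E j ω - 1) / (j : ℝ))}
      ≤ ENNReal.ofReal (exp (-lam * ε
          + 2 * lam^2 * ∑ j ∈ Finset.Icc i n, (1:ℝ) / (j:ℝ)^2)) := by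
  have hσ2 : σ^2 = 1 := by rcases hσ with h | h <;> simp [h]
  have hσabs : |σ| = 1 := by rcases hσ with h | h <;> simp [h]
  set X : ℕ → Ω → ℝ := fun j ω => σ * ((E j ω - 1) / (j : ℝ)) with hX
  have hXm : ∀ j, Measurable (X j) :=
    fun j => (((hmeas j).sub measurable_const).div_const _).const_mul σ
  have hXindep : iIndepFun X P := by
    have := hindep.comp (fun j x => σ * ((x - 1) / (j : ℝ)))
      (fun j => ((measurable_id.sub measurable_const).div_const _).const_mul σ)
    exact this
  -- per-term facts
  have key : ∀ j ∈ Finset.Icc i n,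
      Integrable (fun ω => exp (lam * X j ω)) P ∧
        mgf (X j) P lam ≤ exp (2 * lam^2 / (j:ℝ)^2) := by
    intro j hj
    have hij : i ≤ j := (Finset.mem_Icc.1 hj).1
    have h1j : 1 ≤ j := le_trans h1i hij
    have hj0 : (0:ℝ) < j := by exact_mod_cast h1j
    have hjne : (j:ℝ) ≠ 0 := hj0.ne'
    set u : ℝ := σ * lam / j with hu
    have huabs : |u| ≤ 1/2 := by
      rw [hu, abs_div, abs_mul, hσabs, one_mul, abs_of_nonneg hl0, abs_of_pos hj0,
        div_le_iff₀ hj0]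
      have : (i:ℝ) ≤ j := by exact_mod_cast hij
      linarith
    have hu1 : u < 1 := lt_of_le_of_lt (le_trans (le_abs_self u) huabs) (by norm_num)
    have hmap := law_exp P (E j) (hmeas j) (hdist j)
    have hintE : Integrable (fun ω => exp (u * E j ω)) P := by
      have h1 : Integrable (fun x => exp (u * x)) (P.map (E j)) := by
        rw [hmap]; exact integrable_exp_mul_expMeasure hu1
      exact (integrable_map_measure
        (by exact (measurable_exp.comp (measurable_id.const_mul u)).aestronglyMeasurable)
        (hmeas j).aemeasurable).1 h1
    have hfun : (fun ω => exp (lam * X j ω))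
        = fun ω => exp (-u) * exp (u * E j ω) := by
      ext ω
      rw [← exp_add, hX, hu]
      congr 1
      field_simp
      ring
    constructor
    · rw [hfun]; exact hintE.const_mul _
    · have hint : ∫ ω, exp (u * E j ω) ∂P = (1 - u)⁻¹ := by
        have h5 := integral_map (μ := P) (φ := E j) (f := fun y => exp (u * y)) (hmeas j).aemeasurable
          (by exact (measurable_exp.comp (measurable_id.const_mul u)).aestronglyMeasurable)
        rw [hmap, integral_exp_mul_expMeasure hu1] at h5
        exact h5.symm
      have : mgf (X j) P lam = exp (-u) * (1 - u)⁻¹ := by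
        rw [mgf, hfun, integral_const_mul, hint]
      rw [this]
      refine le_trans (exp_inv_bound huabs) (exp_le_exp.2 (le_of_eq ?_))
      rw [hu]
      field_simp
      ring_nf
      rw [hσ2]
      ring
  -- Chernoff
  have hIntS : Integrable (fun ω => exp (lam * (∑ j ∈ Finset.Icc i n, X j) ω)) P :=
    hXindep.integrable_exp_mul_sum hXm (fun j hj => (key j hj).1)
  have hcher := measure_ge_le_exp_mul_mgf (X := ∑ j ∈ Finset.Icc i n, X j) (μ := P) ε hl0 hIntS
  have hmgfS : mgf (∑ j ∈ Finset.Icc i n, X j) P lam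
      ≤ exp (2 * lam^2 * ∑ j ∈ Finset.Icc i n, (1:ℝ) / (j:ℝ)^2) := by
    rw [hXindep.mgf_sum hXm]
    calc ∏ j ∈ Finset.Icc i n, mgf (X j) P lam
        ≤ ∏ j ∈ Finset.Icc i n, exp (2 * lam^2 / (j:ℝ)^2) :=
          Finset.prod_le_prod (fun j _ => mgf_nonneg) (fun j hj => (key j hj).2)
      _ = exp (∑ j ∈ Finset.Icc i n, 2 * lam^2 / (j:ℝ)^2) := by rw [Real.exp_sum]
      _ = _ := by rw [Finset.mul_sum]; congr 1; exact Finset.sum_congr rfl (fun j _ => by ring)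
  have hset : {ω | ε ≤ ∑ j ∈ Finset.Icc i n, σ * ((E j ω - 1) / (j : ℝ))}
      = {ω | ε ≤ (∑ j ∈ Finset.Icc i n, X j) ω} := by
    ext ω; simp [Finset.sum_apply, hX]
  rw [hset]
  calc P {ω | ε ≤ (∑ j ∈ Finset.Icc i n, X j) ω}
      = ENNReal.ofReal ((P {ω | ε ≤ (∑ j ∈ Finset.Icc i n, X j) ω}).toReal) :=
        (ENNReal.ofReal_toReal (measure_ne_top _ _)).symm
    _ ≤ _ := by
        apply ENNReal.ofReal_le_ofReal
        refine hcher.trans ?_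
        refine le_trans (mul_le_mul_of_nonneg_left hmgfS (exp_pos _).le) (le_of_eq ?_)
        rw [← exp_add]

end Stmt2Aux

theorem stmt2 (P : Measure Ω) [IsProbabilityMeasure P] (E : ℕ → Ω → ℝ)
    (hmeas : ∀ j, Measurable (E j))
    (hindep : iIndepFun E P)
    (hdist : ∀ j, ∀ x : ℝ, 0 ≤ x → P {ω | x < E j ω} = ENNReal.ofReal (Real.exp (-x)))
    (n i : ℕ) (hi : i ∈ Finset.Icc 1 n) (ε : ℝ) (hε : 0 < ε) :
    (ε ≤ 2 * i * ∑ j ∈ Finset.Icc i n, (1 : ℝ) / (j : ℝ) ^ 2 →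
      P {ω | ε < |∑ j ∈ Finset.Icc i n, (E j ω - 1) / (j : ℝ)|}
        ≤ ENNReal.ofReal (2 * Real.exp
            (-(ε ^ 2) / (8 * ∑ j ∈ Finset.Icc i n, (1 : ℝ) / (j : ℝ) ^ 2)))) ∧
    (2 * i * ∑ j ∈ Finset.Icc i n, (1 : ℝ) / (j : ℝ) ^ 2 < ε →
      P {ω | ε < |∑ j ∈ Finset.Icc i n, (E j ω - 1) / (j : ℝ)|}
        ≤ ENNReal.ofReal (2 * Real.exp (-((i : ℝ) * ε) / 4))) := by
  obtain ⟨h1i, hin⟩ := Finset.mem_Icc.1 hi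
  set V : ℝ := ∑ j ∈ Finset.Icc i n, (1 : ℝ) / (j : ℝ) ^ 2 with hVdef
  have hVpos : 0 < V := by
    apply Finset.sum_pos
    · intro j hj
      have h1j : 1 ≤ j := le_trans h1i (Finset.mem_Icc.1 hj).1
      have : (0:ℝ) < (j:ℝ) := by exact_mod_cast h1j
      positivity
    · exact ⟨i, Finset.mem_Icc.2 ⟨le_rfl, hin⟩⟩
  have union : ∀ lam : ℝ, 0 ≤ lam → 2 * lam ≤ (i:ℝ) →
      P {ω | ε < |∑ j ∈ Finset.Icc i n, (E j ω - 1) / (j : ℝ)|}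
        ≤ ENNReal.ofReal (2 * Real.exp (-lam * ε + 2 * lam^2 * V)) := by
    intro lam hl0 hli
    have hpos := Stmt2Aux.tail_bound P E hmeas hindep hdist n i h1i 1 (Or.inl rfl) lam ε hl0 hli
    have hneg := Stmt2Aux.tail_bound P E hmeas hindep hdist n i h1i (-1) (Or.inr rfl) lam ε hl0 hli
    have hsub : {ω | ε < |∑ j ∈ Finset.Icc i n, (E j ω - 1) / (j : ℝ)|}
        ⊆ {ω | ε ≤ ∑ j ∈ Finset.Icc i n, (1:ℝ) * ((E j ω - 1) / (j : ℝ))}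
          ∪ {ω | ε ≤ ∑ j ∈ Finset.Icc i n, (-1:ℝ) * ((E j ω - 1) / (j : ℝ))} := by
      intro ω hω
      simp only [Set.mem_setOf_eq] at hω
      simp only [Set.mem_union, Set.mem_setOf_eq, one_mul, neg_one_mul, Finset.sum_neg_distrib]
      rcases le_or_gt 0 (∑ j ∈ Finset.Icc i n, (E j ω - 1) / (j : ℝ)) with h | h
      · left; rw [abs_of_nonneg h] at hω; exact hω.le
      · right; rw [abs_of_neg h] at hω; exact hω.le
    calc P {ω | ε < |∑ j ∈ Finset.Icc i n, (E j ω - 1) / (j : ℝ)|}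
        ≤ P ({ω | ε ≤ ∑ j ∈ Finset.Icc i n, (1:ℝ) * ((E j ω - 1) / (j : ℝ))}
            ∪ {ω | ε ≤ ∑ j ∈ Finset.Icc i n, (-1:ℝ) * ((E j ω - 1) / (j : ℝ))}) :=
          measure_mono hsub
      _ ≤ _ + _ := measure_union_le _ _
      _ ≤ ENNReal.ofReal (Real.exp (-lam * ε + 2 * lam^2 * V))
            + ENNReal.ofReal (Real.exp (-lam * ε + 2 * lam^2 * V)) := add_le_add hpos hneg
      _ = ENNReal.ofReal (2 * Real.exp (-lam * ε + 2 * lam^2 * V)) := by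
          rw [← ENNReal.ofReal_add (Real.exp_pos _).le (Real.exp_pos _).le]
          congr 1
          ring
  constructor
  · intro hcase
    have hli : 2 * (ε / (4 * V)) ≤ (i:ℝ) := by
      have h2 : 2 * (ε / (4 * V)) = ε / (2 * V) := by ring
      rw [h2, div_le_iff₀ (by positivity)]
      linarith
    have h := union (ε / (4 * V)) (by positivity) hli
    have hexp : -(ε / (4 * V)) * ε + 2 * (ε / (4 * V))^2 * V = -(ε ^ 2) / (8 * V) := by
      field_simp
      ring
    rw [hexp] at h
    exact h
  · intro hcase
    have h := union ((i:ℝ)/2) (by positivity) (by linarith)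
    refine le_trans h ?_
    apply ENNReal.ofReal_le_ofReal
    have hi1 : (1:ℝ) ≤ (i:ℝ) := by exact_mod_cast h1i
    have h2 : (i:ℝ) * (2 * (i:ℝ) * V) ≤ (i:ℝ) * ε :=
      mul_le_mul_of_nonneg_left hcase.le (by positivity)
    have hexp : -((i:ℝ)/2) * ε + 2 * ((i:ℝ)/2)^2 * V ≤ -((i:ℝ) * ε) / 4 := by nlinarith
    have := Real.exp_le_exp.2 hexp
    linarith [mul_le_mul_of_nonneg_left this (by norm_num : (0:ℝ) ≤ 2)]

end
end

section
/- Fix i ∈ {1,…,n} and ε > 2i·Σ_{j=i}^n j^{−2}. Then P(W_{(i)}(n) > U(exp(Σ_{j=i}^n 1/j + ε))) ≤ 2·exp(−iε/4) and P(W_{(i)}(n) < U(exp(Σ_{j=i}^n 1/j − ε))) ≤ 2·exp(−iε/4). -/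
open MeasureTheory ProbabilityTheory Filter Real

noncomputable section

variable {Ω : Type*} [mΩ : MeasurableSpace Ω]

section AuxAnalysis
open Finset Nat

noncomputable def btail (n i : ℕ) (p : ℝ) : ℝ :=
  ∑ k ∈ Finset.Icc i n, (n.choose k : ℝ) * p ^ k * (1 - p) ^ (n - k)

noncomputable def blow (n i : ℕ) (p : ℝ) : ℝ :=
  ∑ k ∈ Finset.range i, (n.choose k : ℝ) * p ^ k * (1 - p) ^ (n - k)

lemma blow_add_btail {n i : ℕ} (h : i ≤ n + 1) (p : ℝ) :
    blow n i p + btail n i p = 1 := by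
  have h0 : (0:ℕ) ≤ i := Nat.zero_le i
  have h1 : blow n i p + btail n i p
      = ∑ k ∈ Finset.range (n+1), (n.choose k : ℝ) * p ^ k * (1 - p) ^ (n - k) := by
    rw [blow, btail, Finset.range_eq_Ico, Finset.range_eq_Ico, ← Finset.Ico_add_one_right_eq_Icc]
    exact Finset.sum_Ico_consecutive (fun k => (n.choose k : ℝ) * p ^ k * (1 - p) ^ (n - k)) h0 h
  have h2 := add_pow p (1-p) n
  simp only [add_sub_cancel, one_pow] at h2
  calc blow n i p + btail n i p
      = ∑ k ∈ Finset.range (n+1), (n.choose k : ℝ) * p ^ k * (1 - p) ^ (n - k) := h1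
    _ = ∑ k ∈ Finset.range (n+1), p ^ k * (1 - p) ^ (n - k) * (n.choose k : ℝ) :=
        Finset.sum_congr rfl (fun k _ => by ring)
    _ = 1 := h2.symm

lemma hasDerivAt_btail {n i : ℕ} (hi : 1 ≤ i) (hin : i ≤ n) (p : ℝ) :
    HasDerivAt (btail n i)
      ((i : ℝ) * (n.choose i : ℝ) * p ^ (i - 1) * (1 - p) ^ (n - i)) p := by
  classical
  set g : ℕ → ℝ := fun k => (k : ℝ) * (n.choose k : ℝ) * p ^ (k - 1) * (1 - p) ^ (n - k) with hg
  have hterm : ∀ k ∈ Finset.Icc i n,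
      HasDerivAt (fun x => (n.choose k : ℝ) * x ^ k * (1 - x) ^ (n - k)) (g k - g (k+1)) p := by
    intro k hk
    rw [Finset.mem_Icc] at hk
    have hk1 : 1 ≤ k := le_trans hi hk.1
    have h1 : HasDerivAt (fun x : ℝ => x ^ k) ((k : ℝ) * p ^ (k - 1)) p := hasDerivAt_pow k p
    have h2 : HasDerivAt (fun x : ℝ => (1 - x) ^ (n - k))
        (((n - k : ℕ) : ℝ) * (1 - p) ^ (n - k - 1) * (0 - 1)) p := by
      exact (hasDerivAt_pow (n - k) (1 - p)).comp p
        ((hasDerivAt_const p (1:ℝ)).sub (hasDerivAt_id p))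
    have h3 := (h1.fun_mul h2).const_mul (n.choose k : ℝ)
    simp only [← mul_assoc] at h3
    refine h3.congr_deriv (Eq.symm ?_)
    have hcast : ((k:ℝ) + 1) * (n.choose (k+1) : ℝ) = (n.choose k : ℝ) * ((n:ℝ) - k) := by
      have := Nat.choose_succ_right_eq n k
      have h4 : ((n.choose (k+1) * (k+1) : ℕ) : ℝ) = ((n.choose k * (n - k) : ℕ) : ℝ) := by
        exact_mod_cast congrArg (Nat.cast (R := ℝ)) this
      push_cast [Nat.cast_sub hk.2] at h4
      linarith [h4]
    have hnk : ((n - k : ℕ) : ℝ) = (n:ℝ) - k := by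
      exact_mod_cast Nat.cast_sub hk.2
    have hsub1 : (k + 1 : ℕ) - 1 = k := by omega
    have hsub2 : n - (k + 1) = n - k - 1 := by omega
    rw [hg]
    simp only [hsub1, hsub2]
    push_cast [hnk]
    linear_combination (-(p ^ k * (1 - p) ^ (n - k - 1))) * hcast
  have hsum : HasDerivAt (fun x => ∑ k ∈ Finset.Icc i n,
      (n.choose k : ℝ) * x ^ k * (1 - x) ^ (n - k))
      (∑ k ∈ Finset.Icc i n, (g k - g (k+1))) p := HasDerivAt.fun_sum hterm
  have htel : ∑ k ∈ Finset.Icc i n, (g k - g (k+1)) = g i - g (n+1) := by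
    rw [← Finset.Ico_add_one_right_eq_Icc, Finset.sum_Ico_eq_sum_range]
    have h5 := Finset.sum_range_sub' (f := fun m => g (i + m)) (n + 1 - i)
    calc ∑ m ∈ Finset.range (n + 1 - i), (g (i + m) - g (i + m + 1))
        = ∑ m ∈ Finset.range (n + 1 - i), (g (i + m) - g (i + (m + 1))) := by
          refine Finset.sum_congr rfl fun m _ => by rw [← add_assoc]
      _ = g (i + 0) - g (i + (n + 1 - i)) := h5
      _ = g i - g (n + 1) := by rw [add_zero, show i + (n + 1 - i) = n + 1 by omega]
  have hzero : g (n + 1) = 0 := by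
    simp [hg, Nat.choose_eq_zero_of_lt (Nat.lt_succ_self n)]
  rw [htel, hzero, sub_zero] at hsum
  exact hsum

lemma btail_nonneg {n i : ℕ} {p : ℝ} (hp : 0 ≤ p) (hp1 : p ≤ 1) : 0 ≤ btail n i p :=
  Finset.sum_nonneg fun k _ =>
    mul_nonneg (mul_nonneg (by positivity) (pow_nonneg hp k)) (pow_nonneg (by linarith) _)

lemma blow_nonneg {n i : ℕ} {p : ℝ} (hp : 0 ≤ p) (hp1 : p ≤ 1) : 0 ≤ blow n i p :=
  Finset.sum_nonneg fun k _ =>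
    mul_nonneg (mul_nonneg (by positivity) (pow_nonneg hp k)) (pow_nonneg (by linarith) _)

lemma btail_zero {n i : ℕ} (hi : 1 ≤ i) : btail n i 0 = 0 :=
  Finset.sum_eq_zero fun k hk => by
    have : 1 ≤ k := le_trans hi (Finset.mem_Icc.mp hk).1
    simp [zero_pow (by omega : k ≠ 0)]

lemma blow_one {n i : ℕ} (hin : i ≤ n) : blow n i 1 = 0 :=
  Finset.sum_eq_zero fun k hk => by
    have : k < i := Finset.mem_range.mp hk
    simp [zero_pow (by omega : n - k ≠ 0)]

lemma btail_one {n i : ℕ} (hin : i ≤ n) : btail n i 1 = 1 := by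
  have h := blow_add_btail (n := n) (i := i) (by omega) 1
  rw [blow_one hin] at h; linarith

lemma prod_Icc_one_nat (m : ℕ) : ∏ j ∈ Finset.Icc 1 m, j = m ! := by
  rw [← Finset.Ico_add_one_right_eq_Icc, Finset.prod_Ico_eq_prod_range]
  simpa [add_comm] using Finset.prod_range_add_one_eq_factorial m

lemma fact_prod_Icc {a b : ℕ} (ha : 1 ≤ a) (h : a ≤ b + 1) :
    (a - 1)! * ∏ j ∈ Finset.Icc a b, j = b ! := by
  have e1 : Finset.Ico 1 a = Finset.Icc 1 (a - 1) := by
    rw [← Finset.Ico_add_one_right_eq_Icc]; congr 1; omega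
  have e2 := Finset.prod_Ico_consecutive (fun j => j) ha h
  have e3 : Finset.Ico 1 (b + 1) = Finset.Icc 1 b := Finset.ext fun x => by
    simp [Nat.lt_succ_iff]
  rw [e1, prod_Icc_one_nat, e3, prod_Icc_one_nat] at e2
  exact e2

lemma prod_Icc_sub_nat {n i θ : ℕ} (hθ : θ ≤ i) (hin : i ≤ n) :
    ∏ j ∈ Finset.Icc i n, (j - θ) = ∏ m ∈ Finset.Icc (i - θ) (n - θ), m := by
  have h := Finset.map_add_right_Icc (i - θ) (n - θ) θ
  rw [show i - θ + θ = i by omega, show n - θ + θ = n by omega] at h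
  rw [← h, Finset.prod_map]
  exact Finset.prod_congr rfl fun m _ => by simp [addRightEmbedding]

lemma prod_Icc_add_nat {n i θ : ℕ} :
    ∏ j ∈ Finset.Icc i n, (j + θ) = ∏ m ∈ Finset.Icc (i + θ) (n + θ), m := by
  rw [← Finset.map_add_right_Icc i n θ, Finset.prod_map]
  exact Finset.prod_congr rfl fun m _ => by simp [addRightEmbedding]

lemma cast_prod_sub {n i θ : ℕ} (hθi : θ ≤ i) :
    ∏ j ∈ Finset.Icc i n, ((j:ℝ) - (θ:ℝ)) = ((∏ j ∈ Finset.Icc i n, (j - θ) : ℕ) : ℝ) := by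
  rw [Nat.cast_prod]
  refine Finset.prod_congr rfl fun j hj => ?_
  have := (Finset.mem_Icc.mp hj).1
  rw [Nat.cast_sub (by omega)]

lemma identU {n i θ : ℕ} (hθ : 1 ≤ θ) (hθi : θ + 1 ≤ i) (hin : i ≤ n) :
    (i:ℝ) * (n.choose i : ℝ) * (∏ j ∈ Finset.Icc i n, ((j:ℝ) - (θ:ℝ)))
      = ((i:ℝ) - (θ:ℝ)) * (∏ j ∈ Finset.Icc i n, (j:ℝ)) * ((n-θ).choose (i-θ) : ℝ) := by
  have hθi' : θ ≤ i := by omega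
  have hin' : i - θ ≤ n - θ := by omega
  have fA := fact_prod_Icc (a := i) (b := n) (by omega) (by omega)
  have fB := fact_prod_Icc (a := i - θ) (b := n - θ) (by omega) (by omega)
  have e3n : n.choose i * ((i * (i-1)!) * (n-i)!) = n ! := by
    rw [Nat.mul_factorial_pred (by omega), ← mul_assoc]
    exact Nat.choose_mul_factorial_mul_factorial hin
  have e4n : (n-θ).choose (i-θ) * (((i-θ) * ((i-θ)-1)!) * ((n-θ)-(i-θ))!) = (n-θ)! := by
    rw [Nat.mul_factorial_pred (by omega), ← mul_assoc]
    exact Nat.choose_mul_factorial_mul_factorial hin'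
  rw [show (n-θ)-(i-θ) = n - i by omega] at e4n
  rw [show (i-θ)-1 = i-θ-1 by omega] at e4n
  -- cast everything
  set a1 : ℝ := ((i-1)! : ℝ) with ha1def
  set a2 : ℝ := ((i-θ-1)! : ℝ) with ha2def
  set d : ℝ := ((n-i)! : ℝ) with hddef
  set fn : ℝ := (n ! : ℝ) with hfndef
  set fm : ℝ := ((n-θ)! : ℝ) with hfmdef
  have ha1 : (0:ℝ) < a1 := by rw [ha1def]; exact_mod_cast Nat.factorial_pos (i-1)
  have ha2 : (0:ℝ) < a2 := by rw [ha2def]; exact_mod_cast Nat.factorial_pos (i-θ-1)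
  have hd : (0:ℝ) < d := by rw [hddef]; exact_mod_cast Nat.factorial_pos (n-i)
  have hi : (0:ℝ) < (i:ℝ) := by exact_mod_cast (by omega : 0 < i)
  have hiθ : (0:ℝ) < (i:ℝ) - (θ:ℝ) := by
    have : (θ:ℝ) + 1 ≤ (i:ℝ) := by exact_mod_cast hθi
    linarith
  have E1 : a1 * (∏ j ∈ Finset.Icc i n, (j:ℝ)) = fn := by
    rw [ha1def, hfndef, ← Nat.cast_prod, ← Nat.cast_mul, fA]
  have E2 : a2 * (∏ j ∈ Finset.Icc i n, ((j:ℝ) - (θ:ℝ))) = fm := by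
    rw [cast_prod_sub hθi', prod_Icc_sub_nat hθi' hin, ha2def, hfmdef, ← Nat.cast_mul, fB]
  have E3 : (n.choose i : ℝ) * (((i:ℝ) * a1) * d) = fn := by
    rw [ha1def, hddef, hfndef]; exact_mod_cast congrArg (Nat.cast (R := ℝ)) e3n
  have E4 : ((n-θ).choose (i-θ) : ℝ) * ((((i:ℝ) - (θ:ℝ)) * a2) * d) = fm := by
    rw [ha2def, hddef, hfmdef]
    have := congrArg (Nat.cast (R := ℝ)) e4n
    push_cast [Nat.cast_sub hθi'] at this
    push_cast
    linarith [this]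
  have hPA : (∏ j ∈ Finset.Icc i n, (j:ℝ)) = fn / a1 := by
    rw [eq_div_iff ha1.ne']; linarith [E1]
  have hPB : (∏ j ∈ Finset.Icc i n, ((j:ℝ) - (θ:ℝ))) = fm / a2 := by
    rw [eq_div_iff ha2.ne']; linarith [E2]
  have hc : (n.choose i : ℝ) = fn / ((i:ℝ) * a1 * d) := by
    rw [eq_div_iff (by positivity)]; linarith [E3]
  have hc' : ((n-θ).choose (i-θ) : ℝ) = fm / ((((i:ℝ) - (θ:ℝ)) * a2) * d) := by
    rw [eq_div_iff (by positivity)]; linarith [E4]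
  rw [hPA, hPB, hc, hc']
  field_simp

lemma cast_prod_add {n i θ : ℕ} :
    ∏ j ∈ Finset.Icc i n, ((j:ℝ) + (θ:ℝ)) = ((∏ j ∈ Finset.Icc i n, (j + θ) : ℕ) : ℝ) := by
  rw [Nat.cast_prod]; exact Finset.prod_congr rfl fun j hj => by push_cast; ring

lemma identL {n i θ : ℕ} (hi : 1 ≤ i) (hin : i ≤ n) (hθ : 1 ≤ θ) :
    (∏ j ∈ Finset.Icc i n, (j:ℝ)) * (((i:ℝ) + (θ:ℝ)) * ((n+θ).choose (i+θ) : ℝ))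
      = (∏ j ∈ Finset.Icc i n, ((j:ℝ) + (θ:ℝ))) * ((i:ℝ) * (n.choose i : ℝ)) := by
  have fA := fact_prod_Icc (a := i) (b := n) (by omega) (by omega)
  have fD := fact_prod_Icc (a := i + θ) (b := n + θ) (by omega) (by omega)
  have e3n : n.choose i * ((i * (i-1)!) * (n-i)!) = n ! := by
    rw [Nat.mul_factorial_pred (by omega), ← mul_assoc]
    exact Nat.choose_mul_factorial_mul_factorial hin
  have e4n : (n+θ).choose (i+θ) * (((i+θ) * ((i+θ)-1)!) * ((n+θ)-(i+θ))!) = (n+θ)! := by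
    rw [Nat.mul_factorial_pred (by omega), ← mul_assoc]
    exact Nat.choose_mul_factorial_mul_factorial (by omega)
  rw [show (n+θ)-(i+θ) = n - i by omega, show (i+θ)-1 = i+θ-1 by omega] at e4n
  set a1 : ℝ := ((i-1)! : ℝ) with ha1def
  set a2 : ℝ := ((i+θ-1)! : ℝ) with ha2def
  set d : ℝ := ((n-i)! : ℝ) with hddef
  set fn : ℝ := (n ! : ℝ) with hfndef
  set fm : ℝ := ((n+θ)! : ℝ) with hfmdef
  have ha1 : (0:ℝ) < a1 := by rw [ha1def]; exact_mod_cast Nat.factorial_pos (i-1)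
  have ha2 : (0:ℝ) < a2 := by rw [ha2def]; exact_mod_cast Nat.factorial_pos (i+θ-1)
  have hd : (0:ℝ) < d := by rw [hddef]; exact_mod_cast Nat.factorial_pos (n-i)
  have hip : (0:ℝ) < (i:ℝ) := by exact_mod_cast (by omega : 0 < i)
  have hiθ : (0:ℝ) < (i:ℝ) + (θ:ℝ) := by positivity
  have E1 : a1 * (∏ j ∈ Finset.Icc i n, (j:ℝ)) = fn := by
    rw [ha1def, hfndef, ← Nat.cast_prod, ← Nat.cast_mul, fA]
  have E2 : a2 * (∏ j ∈ Finset.Icc i n, ((j:ℝ) + (θ:ℝ))) = fm := by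
    rw [cast_prod_add, prod_Icc_add_nat, ha2def, hfmdef, ← Nat.cast_mul, fD]
  have E3 : (n.choose i : ℝ) * (((i:ℝ) * a1) * d) = fn := by
    rw [ha1def, hddef, hfndef]; exact_mod_cast congrArg (Nat.cast (R := ℝ)) e3n
  have E4 : ((n+θ).choose (i+θ) : ℝ) * ((((i:ℝ) + (θ:ℝ)) * a2) * d) = fm := by
    rw [ha2def, hddef, hfmdef]
    have h := congrArg (Nat.cast (R := ℝ)) e4n
    push_cast at h ⊢
    linarith [h]
  have hPA : (∏ j ∈ Finset.Icc i n, (j:ℝ)) = fn / a1 := by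
    rw [eq_div_iff ha1.ne']; linarith [E1]
  have hPB : (∏ j ∈ Finset.Icc i n, ((j:ℝ) + (θ:ℝ))) = fm / a2 := by
    rw [eq_div_iff ha2.ne']; linarith [E2]
  have hc : (n.choose i : ℝ) = fn / ((i:ℝ) * a1 * d) := by
    rw [eq_div_iff (by positivity)]; linarith [E3]
  have hc' : ((n+θ).choose (i+θ) : ℝ) = fm / ((((i:ℝ) + (θ:ℝ)) * a2) * d) := by
    rw [eq_div_iff (by positivity)]; linarith [E4]
  rw [hPA, hPB, hc, hc']
  field_simp

lemma single_term_le {m a : ℕ} (ham : a ≤ m) {x : ℝ} (hx : 0 ≤ x) (hx1 : x ≤ 1) :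
    (m.choose a : ℝ) * x ^ a * (1 - x) ^ (m - a) ≤ 1 := by
  have h1 : blow m (m+1) x + btail m (m+1) x = 1 := blow_add_btail (by omega) x
  have h2 : btail m (m+1) x = 0 := by
    rw [btail, Finset.Icc_eq_empty_iff.mpr (by omega)]; simp
  have h3 : blow m (m+1) x = 1 := by linarith
  calc (m.choose a : ℝ) * x ^ a * (1 - x) ^ (m - a)
      ≤ blow m (m+1) x := by
        refine Finset.single_le_sum (f := fun k => (m.choose k : ℝ) * x ^ k * (1 - x) ^ (m - k))
          (fun k _ => mul_nonneg (mul_nonneg (by positivity) (pow_nonneg hx k))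
            (pow_nonneg (by linarith) _)) (Finset.mem_range.mpr (by omega))
    _ = 1 := h3

lemma btail_le_choose {n i : ℕ} (hi : 1 ≤ i) (hin : i ≤ n) {p : ℝ}
    (hp : 0 ≤ p) (hp1 : p ≤ 1) :
    btail n i p ≤ (n.choose i : ℝ) * p ^ i := by
  set G : ℝ → ℝ := fun x => (n.choose i : ℝ) * x ^ i - btail n i x with hGdef
  have hG : ∀ x : ℝ, HasDerivAt G
      ((n.choose i : ℝ) * ((i:ℝ) * x ^ (i-1))
        - (i:ℝ) * (n.choose i : ℝ) * x ^ (i-1) * (1-x) ^ (n-i)) x := fun x =>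
    ((hasDerivAt_pow i x).const_mul _).sub (hasDerivAt_btail hi hin x)
  have hdiff : Differentiable ℝ G := fun x => (hG x).differentiableAt
  have hmono : MonotoneOn G (Set.Icc 0 1) := by
    refine monotoneOn_of_deriv_nonneg (convex_Icc 0 1) hdiff.continuous.continuousOn
      hdiff.differentiableOn ?_
    intro x hx
    rw [interior_Icc, Set.mem_Ioo] at hx
    rw [(hG x).deriv]
    have h1 : (1 - x) ^ (n - i) ≤ 1 := pow_le_one₀ (by linarith) (by linarith)
    have h2 : (0:ℝ) ≤ (i:ℝ) * (n.choose i : ℝ) * x ^ (i-1) :=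
      mul_nonneg (by positivity) (pow_nonneg hx.1.le _)
    nlinarith [h2, h1, mul_le_mul_of_nonneg_left h1 h2]
  have h0 : G 0 = 0 := by
    rw [hGdef]; simp [btail_zero hi, zero_pow (by omega : i ≠ 0)]
  have := hmono (Set.mem_Icc.mpr ⟨le_refl 0, by norm_num⟩) (Set.mem_Icc.mpr ⟨hp, hp1⟩) hp
  rw [h0] at this
  simp only [hGdef] at this
  linarith

lemma btail_le_theta {n i θ : ℕ} (hθ : 1 ≤ θ) (hθi : θ + 1 ≤ i) (hin : i ≤ n)
    {p : ℝ} (hp : 0 ≤ p) (hp1 : p ≤ 1) :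
    (θ:ℝ) * (∏ j ∈ Finset.Icc i n, ((j:ℝ) - (θ:ℝ))) * btail n i p
      ≤ ((i:ℝ) - (θ:ℝ)) * (∏ j ∈ Finset.Icc i n, (j:ℝ)) * p ^ θ := by
  set A : ℝ := ∏ j ∈ Finset.Icc i n, (j:ℝ) with hAdef
  set B : ℝ := ∏ j ∈ Finset.Icc i n, ((j:ℝ) - (θ:ℝ)) with hBdef
  have hA0 : 0 ≤ A := Finset.prod_nonneg fun j _ => by positivity
  have hB0 : 0 ≤ B := Finset.prod_nonneg fun j hj => by
    have := (Finset.mem_Icc.mp hj).1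
    have : (θ:ℝ) + 1 ≤ (j:ℝ) := by exact_mod_cast by omega
    linarith
  have hiθ : (0:ℝ) ≤ (i:ℝ) - (θ:ℝ) := by
    have : (θ:ℝ) + 1 ≤ (i:ℝ) := by exact_mod_cast hθi
    linarith
  set G : ℝ → ℝ := fun x => ((i:ℝ) - (θ:ℝ)) * A * x ^ θ - (θ:ℝ) * B * btail n i x with hGdef
  have hG : ∀ x : ℝ, HasDerivAt G
      (((i:ℝ) - (θ:ℝ)) * A * ((θ:ℝ) * x ^ (θ-1))
        - (θ:ℝ) * B * ((i:ℝ) * (n.choose i : ℝ) * x ^ (i-1) * (1-x) ^ (n-i))) x := fun x =>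
    ((hasDerivAt_pow θ x).const_mul _).sub ((hasDerivAt_btail (by omega) hin x).const_mul _)
  have hdiff : Differentiable ℝ G := fun x => (hG x).differentiableAt
  have hmono : MonotoneOn G (Set.Icc 0 1) := by
    refine monotoneOn_of_deriv_nonneg (convex_Icc 0 1) hdiff.continuous.continuousOn
      hdiff.differentiableOn ?_
    intro x hx
    rw [interior_Icc, Set.mem_Ioo] at hx
    rw [(hG x).deriv]
    have key : (i:ℝ) * (n.choose i : ℝ) * B = ((i:ℝ) - (θ:ℝ)) * A * ((n-θ).choose (i-θ) : ℝ) :=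
      identU hθ hθi hin
    have hone : ((n-θ).choose (i-θ) : ℝ) * x ^ (i-θ) * (1-x) ^ (n-i) ≤ 1 := by
      have := single_term_le (m := n - θ) (a := i - θ) (by omega) hx.1.le (by linarith)
      rw [show (n-θ) - (i-θ) = n - i by omega] at this
      exact this
    have hxpow : x ^ (i-1) = x ^ (θ-1) * x ^ (i-θ) := by
      rw [← pow_add]; congr 1; omega
    have hterm : (θ:ℝ) * B * ((i:ℝ) * (n.choose i : ℝ) * x ^ (i-1) * (1-x) ^ (n-i))
        ≤ ((i:ℝ) - (θ:ℝ)) * A * ((θ:ℝ) * x ^ (θ-1)) := by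
      have expand : (θ:ℝ) * B * ((i:ℝ) * (n.choose i : ℝ) * x ^ (i-1) * (1-x) ^ (n-i))
          = ((θ:ℝ) * x ^ (θ-1)) * (((i:ℝ) - (θ:ℝ)) * A)
            * (((n-θ).choose (i-θ) : ℝ) * x ^ (i-θ) * (1-x) ^ (n-i)) := by
        rw [hxpow]
        linear_combination ((θ:ℝ) * x ^ (θ-1) * x ^ (i-θ) * (1-x) ^ (n-i)) * key
      rw [expand]
      have hnn : (0:ℝ) ≤ ((θ:ℝ) * x ^ (θ-1)) * (((i:ℝ) - (θ:ℝ)) * A) := by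
        have : (0:ℝ) ≤ x ^ (θ-1) := pow_nonneg hx.1.le _
        positivity
      nlinarith [mul_le_mul_of_nonneg_left hone hnn]
    linarith
  have h0 : G 0 = 0 := by
    rw [hGdef]; simp [btail_zero (by omega : 1 ≤ i), zero_pow (by omega : θ ≠ 0)]
  have := hmono (Set.mem_Icc.mpr ⟨le_refl 0, by norm_num⟩) (Set.mem_Icc.mpr ⟨hp, hp1⟩) hp
  rw [h0] at this
  simp only [hGdef] at this
  linarith

lemma blow_le_theta {n i θ : ℕ} (hi : 1 ≤ i) (hin : i ≤ n) (hθ : 1 ≤ θ)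
    {q : ℝ} (hq : 0 < q) (hq1 : q ≤ 1) :
    q ^ θ * (∏ j ∈ Finset.Icc i n, ((j:ℝ) + (θ:ℝ))) * blow n i q
      ≤ ∏ j ∈ Finset.Icc i n, (j:ℝ) := by
  set A : ℝ := ∏ j ∈ Finset.Icc i n, (j:ℝ) with hAdef
  set D : ℝ := ∏ j ∈ Finset.Icc i n, ((j:ℝ) + (θ:ℝ)) with hDdef
  have hA0 : 0 ≤ A := Finset.prod_nonneg fun j _ => by positivity
  have hD0 : 0 ≤ D := Finset.prod_nonneg fun j _ => by positivity
  have hblowfun : (fun x : ℝ => blow n i x) = fun x => 1 - btail n i x :=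
    funext fun x => by linarith [blow_add_btail (by omega : i ≤ n + 1) x]
  have hblowD : ∀ x : ℝ, HasDerivAt (fun y : ℝ => blow n i y)
      (-((i:ℝ) * (n.choose i : ℝ) * x ^ (i-1) * (1-x) ^ (n-i))) x := by
    intro x
    rw [hblowfun]
    exact (hasDerivAt_btail hi hin x).const_sub 1
  set Φ : ℝ → ℝ := fun x => A * (1 - btail (n+θ) (i+θ) x) - D * (x ^ θ * blow n i x)
    with hPdef
  have hsub : (n+θ) - (i+θ) = n - i := by omega
  have hsub2 : (i+θ) - 1 = (i - 1) + θ := by omega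
  have hP : ∀ x : ℝ, HasDerivAt Φ
      (A * (-(((i+θ:ℕ):ℝ) * ((n+θ).choose (i+θ) : ℝ) * x ^ ((i+θ)-1) * (1-x) ^ (n-i)))
        - D * (((θ:ℝ) * x ^ (θ-1)) * blow n i x
            + x ^ θ * (-((i:ℝ) * (n.choose i : ℝ) * x ^ (i-1) * (1-x) ^ (n-i))))) x := by
    intro x
    have h1 := (hasDerivAt_btail (n := n+θ) (i := i+θ) (by omega) (by omega) x).const_sub 1
    rw [hsub] at h1
    exact (h1.const_mul A).sub (((hasDerivAt_pow θ x).mul (hblowD x)).const_mul D)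
  have hdiff : Differentiable ℝ Φ := fun x => (hP x).differentiableAt
  have key := identL (θ := θ) hi hin hθ
  have hanti : AntitoneOn Φ (Set.Icc 0 1) := by
    refine antitoneOn_of_deriv_nonpos (convex_Icc 0 1) hdiff.continuous.continuousOn
      hdiff.differentiableOn ?_
    intro x hx
    rw [interior_Icc, Set.mem_Ioo] at hx
    rw [(hP x).deriv]
    have hxpow : x ^ ((i+θ)-1) = x ^ θ * x ^ (i-1) := by
      rw [← pow_add]; congr 1; omega
    have hblow0 : 0 ≤ blow n i x := blow_nonneg hx.1.le hx.2.le
    have hxp : (0:ℝ) ≤ x ^ (θ-1) := pow_nonneg hx.1.le _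
    have hcancel : A * (-(((i+θ:ℕ):ℝ) * ((n+θ).choose (i+θ) : ℝ) * x ^ ((i+θ)-1) * (1-x) ^ (n-i)))
        + D * (x ^ θ * ((i:ℝ) * (n.choose i : ℝ) * x ^ (i-1) * (1-x) ^ (n-i))) = 0 := by
      rw [hxpow]
      push_cast
      linear_combination (-(x ^ θ * x ^ (i-1) * (1-x) ^ (n-i))) * key
    have hterm : 0 ≤ D * (((θ:ℝ) * x ^ (θ-1)) * blow n i x) := by
      have : (0:ℝ) ≤ (θ:ℝ) := by positivity
      apply mul_nonneg hD0
      exact mul_nonneg (mul_nonneg this hxp) hblow0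
    nlinarith [hcancel, hterm]
  have hP1 : Φ 1 = 0 := by
    rw [hPdef]
    simp [btail_one (by omega : i+θ ≤ n+θ), blow_one hin]
  have := hanti (Set.mem_Icc.mpr ⟨hq.le, hq1⟩) (Set.mem_Icc.mpr ⟨by norm_num, le_refl 1⟩) hq1
  rw [hP1] at this
  simp only [hPdef] at this
  have hbt0 : 0 ≤ btail (n+θ) (i+θ) q := btail_nonneg hq.le hq1
  nlinarith [this, hbt0, hA0]

lemma aux_exp_upper {x : ℝ} (hx : 0 ≤ x) (hx2 : x ≤ 1/2) :
    1 ≤ (1 - x) * Real.exp (x + x^2) := by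
  set f : ℝ → ℝ := fun y => (1 - y) * Real.exp (y + y^2) with hfdef
  have hf : ∀ y : ℝ, HasDerivAt f ((y - 2*y^2) * Real.exp (y + y^2)) y := by
    intro y
    have h1 : HasDerivAt (fun z : ℝ => 1 - z) (-1) y := (hasDerivAt_id y).const_sub 1
    have h2 : HasDerivAt (fun z : ℝ => Real.exp (z + z^2)) ((1 + 2*y) * Real.exp (y + y^2)) y := by
      have h3 : HasDerivAt (fun z : ℝ => z + z^2) (1 + 2*y) y := by
        simpa using (hasDerivAt_id y).fun_add (hasDerivAt_pow 2 y)
      simpa [mul_comm] using h3.exp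
    have := h1.fun_mul h2
    refine this.congr_deriv ?_
    ring
  have hdiff : Differentiable ℝ f := fun y => (hf y).differentiableAt
  have hmono : MonotoneOn f (Set.Icc 0 (1/2 : ℝ)) := by
    refine monotoneOn_of_deriv_nonneg (convex_Icc _ _) hdiff.continuous.continuousOn
      hdiff.differentiableOn ?_
    intro y hy
    rw [interior_Icc, Set.mem_Ioo] at hy
    rw [(hf y).deriv]
    have : 0 ≤ y - 2*y^2 := by nlinarith [hy.1, hy.2]
    positivity
  have h0 : f 0 = 1 := by simp [hfdef]
  have := hmono (Set.mem_Icc.mpr ⟨le_refl 0, by norm_num⟩) (Set.mem_Icc.mpr ⟨hx, hx2⟩) hx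
  rw [h0] at this
  exact this

lemma aux_exp_lower {x : ℝ} (hx : 0 ≤ x) : Real.exp (x - x^2) ≤ 1 + x := by
  have hf : ∀ y : ℝ, HasDerivAt (fun y : ℝ => (1 + y) * Real.exp (y^2 - y))
      ((2*y^2 + y) * Real.exp (y^2 - y)) y := by
    intro y
    have h1 : HasDerivAt (fun z : ℝ => 1 + z) 1 y := by
      simpa using (hasDerivAt_id y).const_add (1:ℝ)
    have h2 : HasDerivAt (fun z : ℝ => Real.exp (z^2 - z)) ((2*y - 1) * Real.exp (y^2 - y)) y := by
      have h3 : HasDerivAt (fun z : ℝ => z^2 - z) (2*y - 1) y := by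
        simpa using (hasDerivAt_pow 2 y).fun_sub (hasDerivAt_id y)
      simpa [mul_comm] using h3.exp
    have h4 := h1.fun_mul h2
    refine h4.congr_deriv ?_
    ring
  have hdiff : Differentiable ℝ (fun y : ℝ => (1 + y) * Real.exp (y^2 - y)) :=
    fun y => (hf y).differentiableAt
  have hmono : MonotoneOn (fun y : ℝ => (1 + y) * Real.exp (y^2 - y)) (Set.Icc 0 x) := by
    refine monotoneOn_of_deriv_nonneg (convex_Icc _ _) hdiff.continuous.continuousOn
      hdiff.differentiableOn ?_
    intro y hy
    rw [interior_Icc, Set.mem_Ioo] at hy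
    rw [(hf y).deriv]
    have : 0 ≤ 2*y^2 + y := by nlinarith [hy.1]
    positivity
  by_cases hx0 : x = 0
  · simp [hx0]
  · have h5 := hmono (Set.mem_Icc.mpr ⟨le_refl 0, hx⟩) (Set.mem_Icc.mpr ⟨hx, le_refl x⟩) hx
    norm_num at h5
    have hexp : Real.exp (x - x^2) * Real.exp (x^2 - x) = 1 := by
      rw [← Real.exp_add]; norm_num
    nlinarith [h5, Real.exp_pos (x^2 - x), Real.exp_pos (x - x^2)]

lemma prod_sub_ge {n i θ : ℕ} (hθ : 1 ≤ θ) (h2θ : 2*θ ≤ i) (hin : i ≤ n) :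
    (∏ j ∈ Finset.Icc i n, (j:ℝ))
      ≤ (∏ j ∈ Finset.Icc i n, ((j:ℝ) - (θ:ℝ)))
        * Real.exp ((θ:ℝ) * (∑ j ∈ Finset.Icc i n, (1:ℝ)/(j:ℝ))
            + (θ:ℝ)^2 * (∑ j ∈ Finset.Icc i n, (1:ℝ)/(j:ℝ)^2)) := by
  have hexp : Real.exp ((θ:ℝ) * (∑ j ∈ Finset.Icc i n, (1:ℝ)/(j:ℝ))
      + (θ:ℝ)^2 * (∑ j ∈ Finset.Icc i n, (1:ℝ)/(j:ℝ)^2))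
      = ∏ j ∈ Finset.Icc i n, Real.exp ((θ:ℝ)*(1/(j:ℝ)) + (θ:ℝ)^2*(1/(j:ℝ)^2)) := by
    rw [← Real.exp_sum]
    congr 1
    rw [Finset.mul_sum, Finset.mul_sum, ← Finset.sum_add_distrib]
  rw [hexp, ← Finset.prod_mul_distrib]
  refine Finset.prod_le_prod (fun j _ => by positivity) ?_
  intro j hj
  have hij : i ≤ j := (Finset.mem_Icc.mp hj).1
  have hj0 : (0:ℝ) < (j:ℝ) := by exact_mod_cast (by omega : 0 < j)
  have hx0 : 0 ≤ (θ:ℝ)/(j:ℝ) := by positivity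
  have h2θj : 2*(θ:ℝ) ≤ (j:ℝ) := by exact_mod_cast (by omega : 2*θ ≤ j)
  have hx2 : (θ:ℝ)/(j:ℝ) ≤ 1/2 := by rw [div_le_iff₀ hj0]; linarith
  have h := aux_exp_upper hx0 hx2
  have e : ((j:ℝ)) * ((1 - (θ:ℝ)/(j:ℝ)) * Real.exp ((θ:ℝ)/(j:ℝ) + ((θ:ℝ)/(j:ℝ))^2))
      = ((j:ℝ) - (θ:ℝ)) * Real.exp ((θ:ℝ)*(1/(j:ℝ)) + (θ:ℝ)^2*(1/(j:ℝ)^2)) := by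
    have e2 : (θ:ℝ)/(j:ℝ) + ((θ:ℝ)/(j:ℝ))^2 = (θ:ℝ)*(1/(j:ℝ)) + (θ:ℝ)^2*(1/(j:ℝ)^2) := by
      field_simp
    rw [e2]
    have e3 : (j:ℝ) * (1 - (θ:ℝ)/(j:ℝ)) = (j:ℝ) - (θ:ℝ) := by field_simp
    rw [← e3]; ring
  calc (j:ℝ) = (j:ℝ) * 1 := by ring
    _ ≤ (j:ℝ) * ((1 - (θ:ℝ)/(j:ℝ)) * Real.exp ((θ:ℝ)/(j:ℝ) + ((θ:ℝ)/(j:ℝ))^2)) := by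
        exact mul_le_mul_of_nonneg_left h hj0.le
    _ = ((j:ℝ) - (θ:ℝ)) * Real.exp ((θ:ℝ)*(1/(j:ℝ)) + (θ:ℝ)^2*(1/(j:ℝ)^2)) := e

lemma prod_add_ge {n i θ : ℕ} (hi : 1 ≤ i) (hin : i ≤ n) :
    (∏ j ∈ Finset.Icc i n, (j:ℝ))
        * Real.exp ((θ:ℝ) * (∑ j ∈ Finset.Icc i n, (1:ℝ)/(j:ℝ))
            - (θ:ℝ)^2 * (∑ j ∈ Finset.Icc i n, (1:ℝ)/(j:ℝ)^2))
      ≤ ∏ j ∈ Finset.Icc i n, ((j:ℝ) + (θ:ℝ)) := by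
  have hexp : Real.exp ((θ:ℝ) * (∑ j ∈ Finset.Icc i n, (1:ℝ)/(j:ℝ))
      - (θ:ℝ)^2 * (∑ j ∈ Finset.Icc i n, (1:ℝ)/(j:ℝ)^2))
      = ∏ j ∈ Finset.Icc i n, Real.exp ((θ:ℝ)*(1/(j:ℝ)) - (θ:ℝ)^2*(1/(j:ℝ)^2)) := by
    rw [← Real.exp_sum]
    congr 1
    rw [Finset.mul_sum, Finset.mul_sum, ← Finset.sum_sub_distrib]
  rw [hexp, ← Finset.prod_mul_distrib]
  refine Finset.prod_le_prod (fun j _ => by positivity) ?_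
  intro j hj
  have hij : i ≤ j := (Finset.mem_Icc.mp hj).1
  have hj0 : (0:ℝ) < (j:ℝ) := by exact_mod_cast (by omega : 0 < j)
  have hx0 : 0 ≤ (θ:ℝ)/(j:ℝ) := by positivity
  have h := aux_exp_lower hx0
  have e2 : (θ:ℝ)/(j:ℝ) - ((θ:ℝ)/(j:ℝ))^2 = (θ:ℝ)*(1/(j:ℝ)) - (θ:ℝ)^2*(1/(j:ℝ)^2) := by
    field_simp
  rw [e2] at h
  calc (j:ℝ) * Real.exp ((θ:ℝ)*(1/(j:ℝ)) - (θ:ℝ)^2*(1/(j:ℝ)^2))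
      ≤ (j:ℝ) * (1 + (θ:ℝ)/(j:ℝ)) := mul_le_mul_of_nonneg_left h hj0.le
    _ = (j:ℝ) + (θ:ℝ) := by field_simp

lemma exp_harmonic_ge (n : ℕ) :
    (n:ℝ) + 1 ≤ Real.exp (∑ j ∈ Finset.Icc 1 n, (1:ℝ)/(j:ℝ)) := by
  induction n with
  | zero => simp
  | succ m ih =>
    rw [Finset.sum_Icc_succ_top (by omega : 1 ≤ m + 1)]
    rw [Real.exp_add]
    have h1 : (0:ℝ) < (m:ℝ) + 1 := by positivity
    have h2 : 1 + (1:ℝ)/((m:ℝ)+1) ≤ Real.exp ((1:ℝ)/((m:ℝ)+1)) := by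
      have := Real.add_one_le_exp ((1:ℝ)/((m:ℝ)+1))
      linarith
    have h3 : (0:ℝ) < Real.exp ((1:ℝ)/((m:ℝ)+1)) := Real.exp_pos _
    have h4 : ((m:ℝ) + 1) * (1 + (1:ℝ)/((m:ℝ)+1)) = (m:ℝ) + 2 := by field_simp; ring
    push_cast
    calc (m:ℝ) + 1 + 1 = ((m:ℝ) + 1) * (1 + (1:ℝ)/((m:ℝ)+1)) := by rw [h4]; ring
      _ ≤ Real.exp (∑ j ∈ Finset.Icc 1 m, (1:ℝ)/(j:ℝ)) * Real.exp ((1:ℝ)/((m:ℝ)+1)) := by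
          apply mul_le_mul ih h2 (by positivity) (le_of_lt (Real.exp_pos _))
      _ = Real.exp (∑ j ∈ Finset.Icc 1 m, (1:ℝ)/(j:ℝ)) * Real.exp ((1:ℝ)/(((m:ℕ):ℝ)+1)) := by
          norm_num

lemma exp_quad_le {i θ : ℕ} {V ε : ℝ} (hnum : (i:ℝ)^2 ≤ 4*(i:ℝ)*(θ:ℝ) - 2*(θ:ℝ)^2)
    (hV : 0 ≤ V) (hVε : 2*(i:ℝ)*V ≤ ε) (hi1 : 1 ≤ i) :
    Real.exp ((θ:ℝ)^2 * V - (θ:ℝ)*ε) ≤ Real.exp (-((i:ℝ)*ε)/4) := by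
  apply Real.exp_le_exp.mpr
  have hi0 : (0:ℝ) < (i:ℝ) := by exact_mod_cast (by omega : 0 < i)
  have hε0 : 0 ≤ ε := le_trans (by positivity) hVε
  have hVb : V ≤ ε / (2*(i:ℝ)) := by
    rw [le_div_iff₀ (by positivity)]; linarith
  have h1 : (θ:ℝ)^2 * V ≤ (θ:ℝ)^2 * (ε / (2*(i:ℝ))) := by
    apply mul_le_mul_of_nonneg_left hVb (by positivity)
  have h2 : (θ:ℝ)^2 * (ε / (2*(i:ℝ))) - (θ:ℝ)*ε ≤ -((i:ℝ)*ε)/4 := by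
    have expand : (θ:ℝ)^2 * (ε / (2*(i:ℝ))) = ((θ:ℝ)^2 * ε) / (2*(i:ℝ)) := by ring
    rw [expand, div_sub' (by positivity), div_le_div_iff₀ (by positivity) (by norm_num : (0:ℝ) < 4)]
    nlinarith [hnum, hε0, hi0]
  linarith

lemma btail_bound_ge2 {n i : ℕ} (hi2 : 2 ≤ i) (hin : i ≤ n) {ε : ℝ}
    (hVε : 2*(i:ℝ) * (∑ j ∈ Finset.Icc i n, (1:ℝ)/(j:ℝ)^2) ≤ ε) (hε0 : 0 < ε) :
    btail n i (Real.exp (-((∑ j ∈ Finset.Icc i n, (1:ℝ)/(j:ℝ)) + ε)))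
      ≤ 2 * Real.exp (-((i:ℝ)*ε)/4) := by
  set S : ℝ := ∑ j ∈ Finset.Icc i n, (1:ℝ)/(j:ℝ) with hSdef
  set V : ℝ := ∑ j ∈ Finset.Icc i n, (1:ℝ)/(j:ℝ)^2 with hVdef
  set θ : ℕ := i / 2 with hθdef
  have hθ1 : 1 ≤ θ := by omega
  have h2θ : 2*θ ≤ i := by omega
  have hi21 : i ≤ 2*θ + 1 := by omega
  have hθi : θ + 1 ≤ i := by omega
  have hS0 : 0 ≤ S := Finset.sum_nonneg fun j _ => by positivity
  have hV0 : 0 ≤ V := Finset.sum_nonneg fun j _ => by positivity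
  set p0 : ℝ := Real.exp (-(S + ε)) with hp0def
  have hp0 : 0 < p0 := Real.exp_pos _
  have hp1 : p0 ≤ 1 := Real.exp_le_one_iff.mpr (by linarith)
  set A : ℝ := ∏ j ∈ Finset.Icc i n, (j:ℝ) with hAdef
  set B : ℝ := ∏ j ∈ Finset.Icc i n, ((j:ℝ) - (θ:ℝ)) with hBdef
  have hB0 : 0 < B := Finset.prod_pos fun j hj => by
    have h := (Finset.mem_Icc.mp hj).1
    have : (θ:ℝ) + 1 ≤ (j:ℝ) := by exact_mod_cast (by omega : θ + 1 ≤ j)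
    linarith
  have main := btail_le_theta hθ1 hθi hin hp0.le hp1
  have hprod := prod_sub_ge (n := n) hθ1 h2θ hin
  have hpθ : p0 ^ θ = Real.exp ((θ:ℝ) * (-(S + ε))) := by
    rw [hp0def, ← Real.exp_nat_mul]
  have hnum : (i:ℝ)^2 ≤ 4*(i:ℝ)*(θ:ℝ) - 2*(θ:ℝ)^2 := by
    have c1 : 2*(θ:ℝ) ≤ (i:ℝ) := by exact_mod_cast h2θ
    have c2 : (i:ℝ) ≤ 2*(θ:ℝ) + 1 := by exact_mod_cast hi21
    have c3 : (1:ℝ) ≤ (θ:ℝ) := by exact_mod_cast hθ1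
    nlinarith [c1, c2, c3, sq_nonneg ((i:ℝ) - 2*(θ:ℝ))]
  have hquad := exp_quad_le (θ := θ) hnum hV0 hVε (by omega)
  have hiθ2θ : (i:ℝ) - (θ:ℝ) ≤ 2*(θ:ℝ) := by
    have c2 : (i:ℝ) ≤ 2*(θ:ℝ) + 1 := by exact_mod_cast hi21
    have c3 : (1:ℝ) ≤ (θ:ℝ) := by exact_mod_cast hθ1
    linarith
  have hiθ0 : (0:ℝ) ≤ (i:ℝ) - (θ:ℝ) := by
    have : (θ:ℝ) + 1 ≤ (i:ℝ) := by exact_mod_cast hθi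
    linarith
  have chain : ((i:ℝ) - (θ:ℝ)) * A * p0 ^ θ
      ≤ (θ:ℝ) * B * (2 * Real.exp (-((i:ℝ)*ε)/4)) := by
    have step1 : ((i:ℝ) - (θ:ℝ)) * A * p0 ^ θ
        ≤ ((i:ℝ) - (θ:ℝ)) * (B * Real.exp ((θ:ℝ)*S + (θ:ℝ)^2*V)) * p0 ^ θ := by
      apply mul_le_mul_of_nonneg_right _ (pow_nonneg hp0.le θ)
      exact mul_le_mul_of_nonneg_left hprod hiθ0
    have step2 : ((i:ℝ) - (θ:ℝ)) * (B * Real.exp ((θ:ℝ)*S + (θ:ℝ)^2*V)) * p0 ^ θ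
        = ((i:ℝ) - (θ:ℝ)) * B * Real.exp ((θ:ℝ)^2*V - (θ:ℝ)*ε) := by
      rw [hpθ]
      rw [show ((i:ℝ) - (θ:ℝ)) * (B * Real.exp ((θ:ℝ)*S + (θ:ℝ)^2*V)) * Real.exp ((θ:ℝ) * -(S + ε))
          = ((i:ℝ) - (θ:ℝ)) * B * (Real.exp ((θ:ℝ)*S + (θ:ℝ)^2*V) * Real.exp ((θ:ℝ) * -(S + ε)))
          from by ring, ← Real.exp_add]
      congr 2
      ring
    have step3 : ((i:ℝ) - (θ:ℝ)) * B * Real.exp ((θ:ℝ)^2*V - (θ:ℝ)*ε)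
        ≤ (2*(θ:ℝ)) * B * Real.exp (-((i:ℝ)*ε)/4) := by
      apply mul_le_mul (mul_le_mul_of_nonneg_right hiθ2θ hB0.le) hquad
        (le_of_lt (Real.exp_pos _)) (by positivity)
    calc ((i:ℝ) - (θ:ℝ)) * A * p0 ^ θ
        ≤ ((i:ℝ) - (θ:ℝ)) * (B * Real.exp ((θ:ℝ)*S + (θ:ℝ)^2*V)) * p0 ^ θ := step1
      _ = ((i:ℝ) - (θ:ℝ)) * B * Real.exp ((θ:ℝ)^2*V - (θ:ℝ)*ε) := step2
      _ ≤ (2*(θ:ℝ)) * B * Real.exp (-((i:ℝ)*ε)/4) := step3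
      _ = (θ:ℝ) * B * (2 * Real.exp (-((i:ℝ)*ε)/4)) := by ring
  have final : (θ:ℝ) * B * btail n i p0 ≤ (θ:ℝ) * B * (2 * Real.exp (-((i:ℝ)*ε)/4)) :=
    le_trans main chain
  have hθB : (0:ℝ) < (θ:ℝ) * B := by
    have : (0:ℝ) < (θ:ℝ) := by exact_mod_cast (by omega : 0 < θ)
    positivity
  exact le_of_mul_le_mul_left final hθB

lemma blow_bound_main {n i : ℕ} (hi1 : 1 ≤ i) (hin : i ≤ n) {ε : ℝ}
    (hVε : 2*(i:ℝ) * (∑ j ∈ Finset.Icc i n, (1:ℝ)/(j:ℝ)^2) ≤ ε) (hε0 : 0 < ε)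
    (hSε : ε ≤ ∑ j ∈ Finset.Icc i n, (1:ℝ)/(j:ℝ)) :
    blow n i (Real.exp (-((∑ j ∈ Finset.Icc i n, (1:ℝ)/(j:ℝ)) - ε)))
      ≤ 2 * Real.exp (-((i:ℝ)*ε)/4) := by
  set S : ℝ := ∑ j ∈ Finset.Icc i n, (1:ℝ)/(j:ℝ) with hSdef
  set V : ℝ := ∑ j ∈ Finset.Icc i n, (1:ℝ)/(j:ℝ)^2 with hVdef
  set θ : ℕ := (i + 1) / 2 with hθdef
  have hθ1 : 1 ≤ θ := by omega
  have h2θ : i ≤ 2*θ := by omega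
  have hθ21 : 2*θ ≤ i + 1 := by omega
  have hV0 : 0 ≤ V := Finset.sum_nonneg fun j _ => by positivity
  set q : ℝ := Real.exp (-(S - ε)) with hqdef
  have hq : 0 < q := Real.exp_pos _
  have hq1 : q ≤ 1 := Real.exp_le_one_iff.mpr (by linarith)
  set A : ℝ := ∏ j ∈ Finset.Icc i n, (j:ℝ) with hAdef
  set D : ℝ := ∏ j ∈ Finset.Icc i n, ((j:ℝ) + (θ:ℝ)) with hDdef
  have hD0 : 0 < D := Finset.prod_pos fun j hj => by
    have h := (Finset.mem_Icc.mp hj).1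
    have : (1:ℝ) ≤ (j:ℝ) := by exact_mod_cast (by omega : 1 ≤ j)
    positivity
  have main := blow_le_theta (θ := θ) hi1 hin hθ1 hq hq1
  have hprod := prod_add_ge (n := n) (θ := θ) hi1 hin
  have hqθ : q ^ θ = Real.exp ((θ:ℝ) * (-(S - ε))) := by
    rw [hqdef, ← Real.exp_nat_mul]
  have hA' : A ≤ D * Real.exp ((θ:ℝ)^2*V - (θ:ℝ)*S) := by
    have h1 := mul_le_mul_of_nonneg_right hprod
      (le_of_lt (Real.exp_pos (-((θ:ℝ) * S - (θ:ℝ)^2 * V))))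
    rw [mul_assoc, ← Real.exp_add] at h1
    simp only [← hSdef, ← hVdef, add_neg_cancel, Real.exp_zero, mul_one] at h1
    calc A ≤ D * Real.exp (-((θ:ℝ) * S - (θ:ℝ)^2 * V)) := h1
      _ = D * Real.exp ((θ:ℝ)^2*V - (θ:ℝ)*S) := by ring_nf
  have step : q ^ θ * D * blow n i q ≤ D * Real.exp ((θ:ℝ)^2*V - (θ:ℝ)*S) :=
    le_trans main hA'
  have hblow0 : 0 ≤ blow n i q := blow_nonneg hq.le hq1
  have step2 : blow n i q * q ^ θ ≤ Real.exp ((θ:ℝ)^2*V - (θ:ℝ)*S) := by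
    have := (mul_le_mul_iff_of_pos_left hD0).mp (by linarith [step] :
      D * (blow n i q * q ^ θ) ≤ D * Real.exp ((θ:ℝ)^2*V - (θ:ℝ)*S))
    exact this
  have step3 : blow n i q ≤ Real.exp ((θ:ℝ)^2*V - (θ:ℝ)*ε) := by
    have h2 := mul_le_mul_of_nonneg_right step2
      (le_of_lt (Real.exp_pos ((θ:ℝ) * (S - ε))))
    rw [hqθ, mul_assoc, ← Real.exp_add, ← Real.exp_add] at h2
    have e1 : (θ:ℝ) * (-(S - ε)) + (θ:ℝ) * (S - ε) = 0 := by ring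
    have e2 : (θ:ℝ)^2*V - (θ:ℝ)*S + (θ:ℝ) * (S - ε) = (θ:ℝ)^2*V - (θ:ℝ)*ε := by ring
    rw [e1, e2, Real.exp_zero, mul_one] at h2
    exact h2
  have hnum : (i:ℝ)^2 ≤ 4*(i:ℝ)*(θ:ℝ) - 2*(θ:ℝ)^2 := by
    have c1 : (i:ℝ) ≤ 2*(θ:ℝ) := by exact_mod_cast h2θ
    have c2 : 2*(θ:ℝ) ≤ (i:ℝ) + 1 := by exact_mod_cast hθ21
    have c3 : (1:ℝ) ≤ (i:ℝ) := by exact_mod_cast hi1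
    nlinarith [c1, c2, c3, mul_nonneg (sub_nonneg.mpr c1) (sub_nonneg.mpr c2)]
  have hquad := exp_quad_le (θ := θ) hnum hV0 hVε hi1
  calc blow n i q ≤ Real.exp ((θ:ℝ)^2*V - (θ:ℝ)*ε) := step3
    _ ≤ Real.exp (-((i:ℝ)*ε)/4) := hquad
    _ ≤ 2 * Real.exp (-((i:ℝ)*ε)/4) := by nlinarith [Real.exp_pos (-((i:ℝ)*ε)/4)]

lemma btail_bound_one {n : ℕ} (h1n : 1 ≤ n) {ε : ℝ} (hε0 : 0 ≤ ε) :
    btail n 1 (Real.exp (-((∑ j ∈ Finset.Icc 1 n, (1:ℝ)/(j:ℝ)) + ε)))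
      ≤ 2 * Real.exp (-((1:ℝ)*ε)/4) := by
  set S : ℝ := ∑ j ∈ Finset.Icc 1 n, (1:ℝ)/(j:ℝ) with hSdef
  have hS0 : 0 ≤ S := Finset.sum_nonneg fun j _ => by positivity
  set p0 : ℝ := Real.exp (-(S + ε)) with hp0def
  have hp0 : 0 < p0 := Real.exp_pos _
  have hp1 : p0 ≤ 1 := Real.exp_le_one_iff.mpr (by linarith)
  have h1 := btail_le_choose (le_refl 1) h1n hp0.le hp1
  rw [Nat.choose_one_right] at h1
  have h2 : (n:ℝ) * p0 ≤ Real.exp (-ε) := by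
    have h3 : ((n:ℝ) + 1) ≤ Real.exp S := exp_harmonic_ge n
    have h4 : p0 = Real.exp (-S) * Real.exp (-ε) := by
      rw [hp0def, ← Real.exp_add]; congr 1; ring
    have h5 : (n:ℝ) * Real.exp (-S) ≤ 1 := by
      have h6 : Real.exp (-S) * Real.exp S = 1 := by
        rw [← Real.exp_add]; simp
      have h7 := mul_le_mul_of_nonneg_left h3 (le_of_lt (Real.exp_pos (-S)))
      rw [h6] at h7
      nlinarith [Real.exp_pos (-S), h7]
    calc (n:ℝ) * p0 = ((n:ℝ) * Real.exp (-S)) * Real.exp (-ε) := by rw [h4]; ring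
      _ ≤ 1 * Real.exp (-ε) := by
          apply mul_le_mul_of_nonneg_right h5 (le_of_lt (Real.exp_pos _))
      _ = Real.exp (-ε) := by ring
  have h8 : Real.exp (-ε) ≤ Real.exp (-((1:ℝ)*ε)/4) := by
    apply Real.exp_le_exp.mpr; linarith
  calc btail n 1 p0 ≤ (n:ℝ) * p0 ^ 1 := h1
    _ = (n:ℝ) * p0 := by ring
    _ ≤ Real.exp (-ε) := h2
    _ ≤ Real.exp (-((1:ℝ)*ε)/4) := h8
    _ ≤ 2 * Real.exp (-((1:ℝ)*ε)/4) := by nlinarith [Real.exp_pos (-((1:ℝ)*ε)/4)]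

lemma IsCDF.nonneg {F : ℝ → ℝ} (hF : IsCDF F) (x : ℝ) : 0 ≤ F x := by
  rcases le_or_gt x 0 with h | h
  · rw [hF.2.2.1 x h]
  · rw [← hF.2.2.1 0 le_rfl]
    exact hF.1 h.le

lemma IsCDF.le_one {F : ℝ → ℝ} (hF : IsCDF F) (x : ℝ) : F x ≤ 1 :=
  ge_of_tendsto hF.2.2.2 (Filter.eventually_atTop.2 ⟨x, fun z hz => hF.1 hz⟩)

lemma Finv_eq {F : ℝ → ℝ} (hF : IsCDF F) {y : ℝ} (hy0 : 0 < y) (hy1 : y < 1) :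
    F (Finv F y) = y := by
  obtain ⟨hmono, hcont, hzero, htop⟩ := hF
  set s : Set ℝ := {x | y ≤ F x} with hsdef
  have hne : s.Nonempty := (htop.eventually (eventually_ge_nhds hy1)).exists
  have hbdd : BddBelow s := by
    refine ⟨0, fun x hx => ?_⟩
    by_contra hneg
    push_neg at hneg
    have : F x = 0 := hzero x hneg.le
    have : y ≤ 0 := by rw [← this]; exact hx
    linarith
  have hclosed : IsClosed s := isClosed_le continuous_const hcont
  have hmem : Finv F y ∈ s := hclosed.csInf_mem hne hbdd
  have hge : y ≤ F (Finv F y) := hmem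
  have hle : F (Finv F y) ≤ y := by
    have hlt : ∀ x, x < Finv F y → F x < y := by
      intro x hx
      by_contra hge'
      push_neg at hge'
      exact absurd (csInf_le hbdd hge') (not_le.mpr hx)
    have htend : Filter.Tendsto (fun k : ℕ => F (Finv F y - 1/(k+1)))
        Filter.atTop (nhds (F (Finv F y))) := by
      have h1 : Filter.Tendsto (fun k : ℕ => Finv F y - 1/(k+1))
          Filter.atTop (nhds (Finv F y)) := by
        have := tendsto_one_div_add_atTop_nhds_zero_nat (𝕜 := ℝ)
        have h2 := Filter.Tendsto.const_sub (Finv F y) this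
        simpa using h2
      exact (hcont.continuousAt.tendsto.comp h1)
    refine le_of_tendsto htend (Filter.Eventually.of_forall fun k => ?_)
    have : Finv F y - 1/((k:ℝ)+1) < Finv F y := by
      have : (0:ℝ) < 1/((k:ℝ)+1) := by positivity
      linarith
    exact (hlt _ this).le
  linarith

end AuxAnalysis

lemma card_filter_eq (s : Finset ℕ) (f g : ℕ → ℝ) (u : ℝ)
    (hperm : s.val.map f = s.val.map g) :
    (s.filter (fun j => u < f j)).card = (s.filter (fun j => u < g j)).card := by
  classical
  have h1 : ∀ h : ℕ → ℝ, (s.filter (fun j => u < h j)).card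
      = Multiset.countP (fun x => u < x) (s.val.map h) := by
    intro h
    rw [Multiset.countP_map]
    rfl
  rw [h1 f, h1 g, hperm]

lemma count_bound (P : Measure Ω) [IsProbabilityMeasure P]
    (W : ℕ → Ω → ℝ) (hmeas : ∀ j, Measurable (W j))
    (hindep : iIndepFun W P)
    (u : ℝ) {pv : ℝ} (hpv0 : 0 ≤ pv) (hpv1 : pv ≤ 1)
    (hdist : ∀ j, P {ω | u < W j ω} = ENNReal.ofReal pv)
    (n : ℕ) (Pred : ℕ → Prop) [DecidablePred Pred] :
    P {ω | Pred (((Finset.Icc 1 n).filter (fun j => u < W j ω)).card)}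
      ≤ ENNReal.ofReal (∑ k ∈ (Finset.range (n+1)).filter Pred,
          (n.choose k : ℝ) * pv ^ k * (1 - pv) ^ (n - k)) := by
  classical
  set s : Finset ℕ := Finset.Icc 1 n with hsdef
  have hscard : s.card = n := by rw [hsdef, Nat.card_Icc]; omega
  set TS : Finset (Finset ℕ) := s.powerset.filter (fun T => Pred T.card) with hTSdef
  set E : Finset ℕ → Set Ω :=
    fun T => ⋂ j ∈ s, (W j) ⁻¹' (if j ∈ T then Set.Ioi u else Set.Iic u) with hEdef
  have hincl : {ω | Pred (((s.filter (fun j => u < W j ω)).card))} ⊆ ⋃ T ∈ TS, E T := by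
    intro ω hω
    have hT0 : s.filter (fun j => u < W j ω) ∈ TS := by
      rw [hTSdef, Finset.mem_filter, Finset.mem_powerset]
      exact ⟨Finset.filter_subset _ _, hω⟩
    refine Set.mem_biUnion hT0 ?_
    rw [hEdef]
    refine Set.mem_iInter₂.mpr fun j hj => ?_
    by_cases hjT : j ∈ s.filter (fun j => u < W j ω)
    · rw [if_pos hjT]
      exact (Finset.mem_filter.mp hjT).2
    · rw [if_neg hjT]
      have : ¬ (u < W j ω) := fun hc => hjT (Finset.mem_filter.mpr ⟨hj, hc⟩)
      exact not_lt.mp this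
  have hE : ∀ T ∈ TS, P (E T) = ENNReal.ofReal (pv ^ T.card * (1 - pv) ^ (n - T.card)) := by
    intro T hT
    have hTsub : T ⊆ s := Finset.mem_powerset.mp (Finset.mem_filter.mp hT).1
    have happ := (iIndepFun_iff_measure_inter_preimage_eq_mul.mp hindep) s
      (sets := fun j => if j ∈ T then Set.Ioi u else Set.Iic u)
      (fun j _ => by
        by_cases h : j ∈ T
        · simp only [if_pos h]; exact measurableSet_Ioi
        · simp only [if_neg h]; exact measurableSet_Iic)
    rw [hEdef]
    simp only []
    rw [happ]
    have hper : ∀ j ∈ s, P (W j ⁻¹' (if j ∈ T then Set.Ioi u else Set.Iic u))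
        = if j ∈ T then ENNReal.ofReal pv else ENNReal.ofReal (1 - pv) := by
      intro j _
      by_cases hjT : j ∈ T
      · rw [if_pos hjT, if_pos hjT, ← hdist j]
        rfl
      · rw [if_neg hjT, if_neg hjT]
        have hcompl : W j ⁻¹' Set.Iic u = {ω | u < W j ω}ᶜ := by
          ext ω; simp [not_lt]
        rw [hcompl, measure_compl (measurableSet_lt measurable_const (hmeas j)) (measure_ne_top P _),
          hdist j, measure_univ, ← ENNReal.ofReal_one, ← ENNReal.ofReal_sub 1 hpv0]
    rw [Finset.prod_congr rfl hper]
    rw [← Finset.union_sdiff_of_subset hTsub, Finset.prod_union Finset.disjoint_sdiff]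
    have h1 : ∏ j ∈ T, (if j ∈ T then ENNReal.ofReal pv else ENNReal.ofReal (1 - pv))
        = (ENNReal.ofReal pv) ^ T.card := by
      rw [Finset.prod_congr rfl (fun j hj => if_pos hj), Finset.prod_const]
    have h2 : ∏ j ∈ s \ T, (if j ∈ T then ENNReal.ofReal pv else ENNReal.ofReal (1 - pv))
        = (ENNReal.ofReal (1 - pv)) ^ (n - T.card) := by
      rw [Finset.prod_congr rfl (fun j hj => if_neg (Finset.mem_sdiff.mp hj).2),
        Finset.prod_const, Finset.card_sdiff_of_subset hTsub, hscard]
    rw [h1, h2, ← ENNReal.ofReal_pow hpv0, ← ENNReal.ofReal_pow (by linarith),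
      ← ENNReal.ofReal_mul (pow_nonneg hpv0 _)]
  have hsum : ∑ T ∈ TS, (pv ^ T.card * (1 - pv) ^ (n - T.card))
      = ∑ k ∈ (Finset.range (n+1)).filter Pred,
          (n.choose k : ℝ) * pv ^ k * (1 - pv) ^ (n - k) := by
    rw [hTSdef, Finset.sum_filter]
    rw [Finset.sum_powerset_apply_card
      (f := fun m => if Pred m then pv ^ m * (1 - pv) ^ (n - m) else 0)]
    rw [hscard, Finset.sum_filter]
    refine Finset.sum_congr rfl fun m _ => ?_
    rw [smul_ite, smul_zero]
    split
    · rw [nsmul_eq_mul]; ring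
    · rfl
  calc P {ω | Pred (((s.filter (fun j => u < W j ω)).card))}
      ≤ P (⋃ T ∈ TS, E T) := measure_mono hincl
    _ ≤ ∑ T ∈ TS, P (E T) := measure_biUnion_finset_le TS E
    _ = ∑ T ∈ TS, ENNReal.ofReal (pv ^ T.card * (1 - pv) ^ (n - T.card)) :=
        Finset.sum_congr rfl hE
    _ = ENNReal.ofReal (∑ T ∈ TS, (pv ^ T.card * (1 - pv) ^ (n - T.card))) :=
        (ENNReal.ofReal_sum_of_nonneg (fun T _ =>
          mul_nonneg (pow_nonneg hpv0 _) (pow_nonneg (by linarith) _))).symm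
    _ = ENNReal.ofReal (∑ k ∈ (Finset.range (n+1)).filter Pred,
          (n.choose k : ℝ) * pv ^ k * (1 - pv) ^ (n - k)) := by rw [hsum]

theorem stmt3 (F : ℝ → ℝ) (hF : IsCDF F)
    (P : Measure Ω) [IsProbabilityMeasure P] (W : ℕ → Ω → ℝ) (Wo : ℕ → ℕ → Ω → ℝ)
    (hW : IIDWith P F W) (hWo : IsOrderStats W Wo)
    (n i : ℕ) (hi : i ∈ Finset.Icc 1 n) (ε : ℝ)
    (hε : 2 * i * ∑ j ∈ Finset.Icc i n, (1 : ℝ) / (j : ℝ) ^ 2 < ε) :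
    P {ω | Ufun F (Real.exp ((∑ j ∈ Finset.Icc i n, (1 : ℝ) / (j : ℝ)) + ε)) < Wo n i ω}
        ≤ ENNReal.ofReal (2 * Real.exp (-((i : ℝ) * ε) / 4)) ∧
    P {ω | Wo n i ω < Ufun F (Real.exp ((∑ j ∈ Finset.Icc i n, (1 : ℝ) / (j : ℝ)) - ε))}
        ≤ ENNReal.ofReal (2 * Real.exp (-((i : ℝ) * ε) / 4)) := by
  classical
  obtain ⟨hWmeas, hWindep, hWcdf⟩ := hW
  obtain ⟨hWomeas, hWomono, hWoperm⟩ := hWo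
  rw [Finset.mem_Icc] at hi
  obtain ⟨hi1, hin⟩ := hi
  set S : ℝ := ∑ j ∈ Finset.Icc i n, (1:ℝ)/(j:ℝ) with hSdef
  set V : ℝ := ∑ j ∈ Finset.Icc i n, (1:ℝ)/(j:ℝ)^2 with hVdef
  have hical : (0:ℝ) < (i:ℝ) := by exact_mod_cast (by omega : 0 < i)
  have hV0 : 0 < V := by
    refine Finset.sum_pos (fun j hj => ?_) ⟨i, Finset.mem_Icc.mpr ⟨le_refl i, hin⟩⟩
    have h1 := (Finset.mem_Icc.mp hj).1
    have : (0:ℝ) < (j:ℝ) := by exact_mod_cast (by omega : 0 < j)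
    positivity
  have hε0 : 0 < ε := lt_trans (by positivity) hε
  have hVε : 2*(i:ℝ)*V ≤ ε := le_of_lt hε
  have hS0 : 0 ≤ S := Finset.sum_nonneg fun j _ => by positivity
  have hFnn : ∀ x, 0 ≤ F x := IsCDF.nonneg hF
  have hFle1 : ∀ x, F x ≤ 1 := IsCDF.le_one hF
  have hdist : ∀ u : ℝ, ∀ j, P {ω | u < W j ω} = ENNReal.ofReal (1 - F u) := by
    intro u j
    have hceq : {ω | u < W j ω} = {ω | W j ω ≤ u}ᶜ := by ext ω; simp [not_le]
    rw [hceq, prob_compl_eq_one_sub (measurableSet_le (hWmeas j) measurable_const), hWcdf j u,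
      ← ENNReal.ofReal_one, ← ENNReal.ofReal_sub 1 (hFnn u)]
  have hcount : ∀ u : ℝ, ∀ ω : Ω, ((Finset.Icc 1 n).filter (fun j => u < W j ω)).card
      = ((Finset.Icc 1 n).filter (fun j => u < Wo n j ω)).card := fun u ω =>
    card_filter_eq _ _ _ u (hWoperm n ω).symm
  constructor
  · -- upper bound
    set u1 : ℝ := Ufun F (Real.exp (S + ε)) with hu1def
    have hy1 : (0:ℝ) < 1 - Real.exp (-(S+ε)) := by
      have : Real.exp (-(S+ε)) < 1 := Real.exp_lt_one_iff.mpr (by linarith)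
      linarith
    have hy2 : 1 - Real.exp (-(S+ε)) < 1 := by
      have := Real.exp_pos (-(S+ε)); linarith
    have hFu1 : F u1 = 1 - Real.exp (-(S+ε)) := by
      have e : Ufun F (Real.exp (S+ε)) = Finv F (1 - Real.exp (-(S+ε))) := by
        rw [Ufun, Real.exp_neg, one_div]
      rw [hu1def, e]
      exact Finv_eq hF hy1 hy2
    have hpveq : 1 - F u1 = Real.exp (-(S+ε)) := by rw [hFu1]; ring
    have hincl : {ω | u1 < Wo n i ω}
        ⊆ {ω | i ≤ ((Finset.Icc 1 n).filter (fun j => u1 < W j ω)).card} := by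
      intro ω hω
      simp only [Set.mem_setOf_eq] at hω ⊢
      rw [hcount u1 ω]
      have hsub : Finset.Icc 1 i ⊆ (Finset.Icc 1 n).filter (fun j => u1 < Wo n j ω) := by
        intro j hj
        rw [Finset.mem_Icc] at hj
        have hjmem : j ∈ Finset.Icc 1 n := Finset.mem_Icc.mpr ⟨hj.1, le_trans hj.2 hin⟩
        refine Finset.mem_filter.mpr ⟨hjmem, ?_⟩
        exact lt_of_lt_of_le hω (hWomono n ω j hjmem i (Finset.mem_Icc.mpr ⟨hi1, hin⟩) hj.2)
      calc i = (Finset.Icc 1 i).card := by rw [Nat.card_Icc]; omega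
        _ ≤ _ := Finset.card_le_card hsub
    have hfilter : (Finset.range (n+1)).filter (fun k => i ≤ k) = Finset.Icc i n := by
      ext k
      simp only [Finset.mem_filter, Finset.mem_range, Finset.mem_Icc]
      omega
    have hcb := count_bound P W hWmeas hWindep u1 (by linarith [hFle1 u1])
      (by linarith [hFnn u1]) (hdist u1) n (fun k => i ≤ k)
    rw [hfilter] at hcb
    have hbt : (∑ k ∈ Finset.Icc i n, (n.choose k : ℝ) * (1 - F u1) ^ k
        * (1 - (1 - F u1)) ^ (n - k)) = btail n i (1 - F u1) := rfl
    rw [hbt, hpveq] at hcb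
    have hbound : btail n i (Real.exp (-(S+ε))) ≤ 2 * Real.exp (-((i:ℝ)*ε)/4) := by
      rcases eq_or_lt_of_le hi1 with h1 | h2
      · subst h1
        have hb := btail_bound_one (n := n) (by omega) hε0.le
        rw [hSdef]
        simpa using hb
      · exact btail_bound_ge2 (by omega) hin hVε hε0
    calc P {ω | u1 < Wo n i ω}
        ≤ P {ω | i ≤ ((Finset.Icc 1 n).filter (fun j => u1 < W j ω)).card} :=
          measure_mono hincl
      _ ≤ ENNReal.ofReal (btail n i (Real.exp (-(S+ε)))) := hcb
      _ ≤ ENNReal.ofReal (2 * Real.exp (-((i:ℝ)*ε)/4)) := ENNReal.ofReal_le_ofReal hbound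
  · -- lower bound
    set u2 : ℝ := Ufun F (Real.exp (S - ε)) with hu2def
    have hincl2 : {ω | Wo n i ω < u2}
        ⊆ {ω | ((Finset.Icc 1 n).filter (fun j => u2 < W j ω)).card < i} := by
      intro ω hω
      simp only [Set.mem_setOf_eq] at hω ⊢
      rw [hcount u2 ω]
      have hsub : (Finset.Icc 1 n).filter (fun j => u2 < Wo n j ω) ⊆ Finset.Icc 1 (i-1) := by
        intro j hj
        rw [Finset.mem_filter] at hj
        obtain ⟨hjmem, hjlt⟩ := hj
        have hjm := Finset.mem_Icc.mp hjmem
        rw [Finset.mem_Icc]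
        refine ⟨hjm.1, ?_⟩
        by_contra hcon
        push_neg at hcon
        have hij : i ≤ j := by omega
        have hmono := hWomono n ω i (Finset.mem_Icc.mpr ⟨hi1, hin⟩) j hjmem hij
        linarith
      calc ((Finset.Icc 1 n).filter (fun j => u2 < Wo n j ω)).card
          ≤ (Finset.Icc 1 (i-1)).card := Finset.card_le_card hsub
        _ = i - 1 := by rw [Nat.card_Icc]; omega
        _ < i := by omega
    have hfilter2 : (Finset.range (n+1)).filter (fun k => k < i) = Finset.range i := by
      ext k
      simp only [Finset.mem_filter, Finset.mem_range]
      omega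
    have hcb2 := count_bound P W hWmeas hWindep u2 (by linarith [hFle1 u2])
      (by linarith [hFnn u2]) (hdist u2) n (fun k => k < i)
    rw [hfilter2] at hcb2
    have hbl : (∑ k ∈ Finset.range i, (n.choose k : ℝ) * (1 - F u2) ^ k
        * (1 - (1 - F u2)) ^ (n - k)) = blow n i (1 - F u2) := rfl
    rw [hbl] at hcb2
    have hbound2 : blow n i (1 - F u2) ≤ 2 * Real.exp (-((i:ℝ)*ε)/4) := by
      rcases le_or_gt S ε with hcase | hcase
      · -- u2 = 0 and F u2 = 0
        have hset : {x : ℝ | 1 - 1/Real.exp (S - ε) ≤ F x} = Set.univ := by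
          refine Set.eq_univ_of_forall fun x => ?_
          have h1 : Real.exp (S - ε) ≤ 1 := Real.exp_le_one_iff.mpr (by linarith)
          have h2 : (1:ℝ) ≤ 1/Real.exp (S-ε) := by
            rw [le_div_iff₀ (Real.exp_pos _)]; linarith
          have h3 := hFnn x
          simp only [Set.mem_setOf_eq]
          linarith
        have hu2val : u2 = 0 := by
          rw [hu2def, Ufun, Finv, hset]
          exact Real.sInf_of_not_bddBelow (not_bddBelow_univ)
        have hFu2 : F u2 = 0 := by rw [hu2val]; exact hF.2.2.1 0 le_rfl
        rw [hFu2, sub_zero, blow_one hin]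
        positivity
      · have hy1 : (0:ℝ) < 1 - Real.exp (-(S-ε)) := by
          have : Real.exp (-(S-ε)) < 1 := Real.exp_lt_one_iff.mpr (by linarith)
          linarith
        have hy2 : 1 - Real.exp (-(S-ε)) < 1 := by
          have := Real.exp_pos (-(S-ε)); linarith
        have hFu2 : F u2 = 1 - Real.exp (-(S-ε)) := by
          have e : Ufun F (Real.exp (S-ε)) = Finv F (1 - Real.exp (-(S-ε))) := by
            rw [Ufun, Real.exp_neg, one_div]
          rw [hu2def, e]
          exact Finv_eq hF hy1 hy2
        have hpveq2 : 1 - F u2 = Real.exp (-(S-ε)) := by rw [hFu2]; ring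
        rw [hpveq2]
        exact blow_bound_main hi1 hin hVε hε0 hcase.le
    calc P {ω | Wo n i ω < u2}
        ≤ P {ω | ((Finset.Icc 1 n).filter (fun j => u2 < W j ω)).card < i} :=
          measure_mono hincl2
      _ ≤ ENNReal.ofReal (blow n i (1 - F u2)) := hcb2
      _ ≤ ENNReal.ofReal (2 * Real.exp (-((i:ℝ)*ε)/4)) := ENNReal.ofReal_le_ofReal hbound2

end
end

section
/- Let λ > 0, let n ≥ 2 be an integer, and let X be a Poisson random variable with mean λ. Then P( |X − λ| ≥ max(√(5·log(n)·λ), 5·log(n)) ) ≤ n^{−5/4}. -/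
open MeasureTheory ProbabilityTheory Filter Real

noncomputable section

variable {Ω : Type*} [mΩ : MeasurableSpace Ω]

lemma tsum_exp' (x : ℝ) : ∑' k : ℕ, x ^ k / (Nat.factorial k : ℝ) = Real.exp x := by
  rw [Real.exp_eq_exp_ℝ, NormedSpace.exp_eq_tsum_div]

lemma keylog {x : ℝ} (hx : 1 ≤ x) : 2*(x-1)/(x+1) ≤ Real.log x := by
  have hmono : MonotoneOn (fun y => Real.log y - 2*(y-1)/(y+1)) (Set.Ici (1:ℝ)) := by
    have hd : ∀ y ∈ interior (Set.Ici (1:ℝ)),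
        HasDerivAt (fun y => Real.log y - 2*(y-1)/(y+1)) (1/y - 4/(y+1)^2) y := by
      intro y hy
      rw [interior_Ici] at hy
      have hy1 : (1:ℝ) < y := hy
      have h2 : HasDerivAt (fun y : ℝ => 2*(y-1)/(y+1)) (4/(y+1)^2) y := by
        have hnum : HasDerivAt (fun y : ℝ => 2*(y-1)) 2 y := by
          simpa using ((hasDerivAt_id y).sub_const 1).const_mul 2
        have hden : HasDerivAt (fun y : ℝ => y+1) 1 y := (hasDerivAt_id y).add_const 1
        have := hnum.div hden (by linarith : y + 1 ≠ 0)
        refine this.congr_deriv ?_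
        field_simp
        ring
      have h1 : HasDerivAt Real.log (1/y) y := by
        simpa [one_div] using Real.hasDerivAt_log (by linarith : y ≠ 0)
      exact h1.sub h2
    apply monotoneOn_of_deriv_nonneg (convex_Ici 1)
    · apply ContinuousOn.sub
      · exact Real.continuousOn_log.mono (by intro y hy; simp at hy ⊢; linarith)
      · apply ContinuousOn.div (by fun_prop) (by fun_prop)
        intro y hy
        simp only [Set.mem_Ici] at hy
        intro h; linarith
    · intro y hy
      exact ((hd y hy).differentiableAt).differentiableWithinAt
    · intro y hy
      rw [(hd y hy).deriv]
      rw [interior_Ici] at hy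
      have hy1 : (1:ℝ) < y := hy
      rw [sub_nonneg, div_le_div_iff₀ (by positivity) (by positivity)]
      nlinarith [sq_nonneg (y-1)]
  have h := hmono (Set.self_mem_Ici) (show x ∈ Set.Ici (1:ℝ) from hx) hx
  simp only [Real.log_one] at h
  linarith [h]

lemma hplus {u : ℝ} (hu : 0 ≤ u) : 3*u^2/(2*(3+u)) ≤ (1+u)*Real.log (1+u) - u := by
  have hmono : MonotoneOn (fun y => (1+y)*Real.log (1+y) - y - 3*y^2/(2*(3+y)))
      (Set.Ici (0:ℝ)) := by
    have hd : ∀ y ∈ interior (Set.Ici (0:ℝ)),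
        HasDerivAt (fun y => (1+y)*Real.log (1+y) - y - 3*y^2/(2*(3+y)))
          (Real.log (1+y) - (6*y^2+36*y)/(2*(3+y))^2) y := by
      intro y hy
      rw [interior_Ici] at hy
      have hy0 : (0:ℝ) < y := hy
      have h1p : (0:ℝ) < 1 + y := by linarith
      have hlog : HasDerivAt (fun y : ℝ => Real.log (1+y)) (1/(1+y)) y := by
        have := ((hasDerivAt_id y).const_add 1).log (ne_of_gt h1p)
        simpa [one_div] using this
      have hmul : HasDerivAt (fun y : ℝ => (1+y)*Real.log (1+y))
          (Real.log (1+y) + 1) y := by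
        have := ((hasDerivAt_id y).const_add 1).mul hlog
        refine this.congr_deriv ?_
        field_simp
        simp only [id_eq]
        ring
      have hq : HasDerivAt (fun y : ℝ => 3*y^2/(2*(3+y)))
          ((6*y*(2*(3+y)) - 3*y^2*2)/(2*(3+y))^2) y := by
        have hnum : HasDerivAt (fun y : ℝ => 3*y^2) (6*y) y := by
          have := (hasDerivAt_pow 2 y).const_mul 3
          refine this.congr_deriv ?_
          push_cast
          ring
        have hden : HasDerivAt (fun y : ℝ => 2*(3+y)) 2 y := by
          simpa using ((hasDerivAt_id y).const_add 3).const_mul 2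
        exact hnum.div hden (by positivity)
      have := (hmul.sub (hasDerivAt_id y)).sub hq
      refine this.congr_deriv ?_
      have : (2*(3+y))^2 ≠ 0 := by positivity
      field_simp
      ring
    apply monotoneOn_of_deriv_nonneg (convex_Ici 0)
    · apply ContinuousOn.sub
      apply ContinuousOn.sub
      · apply ContinuousOn.mul (by fun_prop)
        apply ContinuousOn.log (by fun_prop)
        intro y hy; simp only [Set.mem_Ici] at hy; intro h; linarith
      · fun_prop
      · apply ContinuousOn.div (by fun_prop) (by fun_prop)
        intro y hy; simp only [Set.mem_Ici] at hy; intro h; linarith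
    · intro y hy
      exact ((hd y hy).differentiableAt).differentiableWithinAt
    · intro y hy
      rw [(hd y hy).deriv]
      rw [interior_Ici] at hy
      have hy0 : (0:ℝ) < y := hy
      have hk := keylog (show (1:ℝ) ≤ 1 + y by linarith)
      have hk' : 2*y/(y+2) ≤ Real.log (1+y) := by
        have : 2*((1+y)-1)/((1+y)+1) = 2*y/(y+2) := by ring_nf
        linarith [hk, this.symm.le, this.le]
      have : (6*y^2+36*y)/(2*(3+y))^2 ≤ 2*y/(y+2) := by
        rw [div_le_div_iff₀ (by positivity) (by positivity)]
        nlinarith [hy0.le]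
      linarith
  have h := hmono (Set.self_mem_Ici) (show u ∈ Set.Ici (0:ℝ) from hu) hu
  norm_num at h
  linarith [h]

lemma hminus {u : ℝ} (hu0 : 0 ≤ u) (hu1 : u < 1) :
    3*u^2/(2*(3-u)) ≤ (1-u)*Real.log (1-u) + u := by
  rcases eq_or_lt_of_le hu0 with h0 | h0
  · simp [← h0]
  set s := 1 - u with hs
  have hs0 : 0 < s := by simp [hs]; linarith
  have hs1 : s < 1 := by simp [hs]; linarith
  have hanti : AntitoneOn (fun y => y*Real.log y + 1 - y - 3*(1-y)^2/(2*(2+y)))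
      (Set.Icc s 1) := by
    have hd : ∀ y ∈ interior (Set.Icc s (1:ℝ)),
        HasDerivAt (fun y => y*Real.log y + 1 - y - 3*(1-y)^2/(2*(2+y)))
          (Real.log y + 3*(1-y)*(5+y)/(2*(2+y)^2)) y := by
      intro y hy
      rw [interior_Icc] at hy
      have hy0 : (0:ℝ) < y := lt_of_lt_of_le hs0 hy.1.le
      have hmul : HasDerivAt (fun y : ℝ => y * Real.log y) (Real.log y + 1) y := by
        have := (hasDerivAt_id y).mul (Real.hasDerivAt_log (ne_of_gt hy0))
        refine this.congr_deriv ?_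
        field_simp
        simp only [id_eq]
        ring
      have hq : HasDerivAt (fun y : ℝ => 3*(1-y)^2/(2*(2+y)))
          (((3*(2*(1-y)*(-1)))*(2*(2+y)) - 3*(1-y)^2*2)/(2*(2+y))^2) y := by
        have hnum : HasDerivAt (fun y : ℝ => 3*(1-y)^2) (3*(2*(1-y)*(-1))) y := by
          have h1 : HasDerivAt (fun y : ℝ => 1 - y) (-1) y := by
            simpa using (hasDerivAt_id y).const_sub 1
          have := (h1.pow 2).const_mul 3
          refine this.congr_deriv ?_
          ring
        have hden : HasDerivAt (fun y : ℝ => 2*(2+y)) 2 y := by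
          simpa using ((hasDerivAt_id y).const_add 2).const_mul 2
        exact hnum.div hden (by positivity)
      have := ((hmul.add_const 1).sub (hasDerivAt_id y)).sub hq
      refine this.congr_deriv ?_
      have h2 : (2+y) ≠ 0 := by positivity
      field_simp
      ring
    apply antitoneOn_of_deriv_nonpos (convex_Icc s 1)
    · apply ContinuousOn.sub
      apply ContinuousOn.sub
      apply ContinuousOn.add
      · apply ContinuousOn.mul (by fun_prop)
        apply ContinuousOn.log (by fun_prop)
        intro y hy
        have := hy.1
        intro h; rw [h] at this; linarith
      · fun_prop
      · fun_prop
      · apply ContinuousOn.div (by fun_prop) (by fun_prop)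
        intro y hy
        have := hy.1
        intro h; nlinarith [hs0]
    · intro y hy
      exact ((hd y hy).differentiableAt).differentiableWithinAt
    · intro y hy
      rw [(hd y hy).deriv]
      rw [interior_Icc] at hy
      have hy0 : (0:ℝ) < y := lt_of_lt_of_le hs0 hy.1.le
      have hy1 : y < 1 := hy.2
      have hk := keylog (show (1:ℝ) ≤ 1/y by rw [le_div_iff₀ hy0]; linarith)
      have hlog : Real.log (1/y) = - Real.log y := by
        rw [one_div, Real.log_inv]
      rw [hlog] at hk
      have hk' : 2*(1-y)/(1+y) ≤ - Real.log y := by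
        have he : 2*(1/y-1)/(1/y+1) = 2*(1-y)/(1+y) := by
          rw [div_eq_div_iff (by positivity) (by positivity)]
          field_simp
        linarith [hk, he.symm.le, he.le]
      have : 3*(1-y)*(5+y)/(2*(2+y)^2) ≤ 2*(1-y)/(1+y) := by
        rw [div_le_div_iff₀ (by positivity) (by positivity)]
        nlinarith [sq_nonneg (y-1), hy0.le, hy1.le]
      linarith
  have h := hanti (Set.mem_Icc.2 ⟨le_refl s, hs1.le⟩) (Set.mem_Icc.2 ⟨hs1.le, le_refl 1⟩) hs1.le
  norm_num at h
  have he : s * Real.log s + 1 - s - 3*(1-s)^2/(2*(2+s))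
      = (1-u)*Real.log (1-u) + u - 3*u^2/(2*(3-u)) := by
    simp only [hs]
    ring_nf
  linarith [he.symm.le, he.le, h]


lemma chernoff_upper (lam t : ℝ) (hlam : 0 < lam) (ht : 0 < t) :
    (∑' k : ℕ, if lam + t ≤ (k : ℝ)
        then ENNReal.ofReal (Real.exp (-lam) * lam ^ k / (Nat.factorial k : ℝ)) else 0)
      ≤ ENNReal.ofReal (Real.exp (-(3 * t ^ 2 / (2 * (3 * lam + t))))) := by
  set θ := Real.log ((lam + t)/lam) with hθdef
  have hfrac : (1:ℝ) ≤ (lam + t)/lam := by rw [le_div_iff₀ hlam]; linarith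
  have hθ0 : 0 ≤ θ := Real.log_nonneg hfrac
  have hexpθ : Real.exp θ = (lam + t)/lam := Real.exp_log (by positivity)
  set C := Real.exp (-lam - θ * (lam + t)) with hC
  have key : ∀ k : ℕ, (if lam + t ≤ (k:ℝ)
        then ENNReal.ofReal (Real.exp (-lam) * lam ^ k / (Nat.factorial k : ℝ)) else 0)
      ≤ ENNReal.ofReal (C * ((lam + t) ^ k / (Nat.factorial k : ℝ))) := by
    intro k
    split_ifs with h
    · apply ENNReal.ofReal_le_ofReal
      have hpow : (lam + t)^k = lam^k * Real.exp θ ^ k := by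
        rw [hexpθ, div_pow, mul_div_cancel₀ _ (pow_ne_zero k hlam.ne')]
      have hle : Real.exp (-lam) ≤ Real.exp (-lam - θ*(lam+t) + k*θ) := by
        apply Real.exp_le_exp.2
        nlinarith [mul_nonneg hθ0 (sub_nonneg.2 h)]
      have hfac : (0:ℝ) < (Nat.factorial k : ℝ) := by positivity
      calc Real.exp (-lam) * lam ^ k / (Nat.factorial k : ℝ)
          ≤ Real.exp (-lam - θ*(lam+t) + k*θ) * lam ^ k / (Nat.factorial k : ℝ) := by
            gcongr
        _ = C * ((lam + t) ^ k / (Nat.factorial k : ℝ)) := by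
            rw [Real.exp_add, hC, hpow, ← Real.exp_nat_mul]
            ring
    · exact zero_le
  refine le_trans (ENNReal.tsum_le_tsum key) ?_
  have hsumm : Summable (fun k : ℕ => C * ((lam+t)^k / (Nat.factorial k : ℝ))) :=
    (Real.summable_pow_div_factorial (lam+t)).mul_left C
  rw [← ENNReal.ofReal_tsum_of_nonneg (fun k => by positivity) hsumm]
  apply ENNReal.ofReal_le_ofReal
  rw [tsum_mul_left, tsum_exp', hC, ← Real.exp_add]
  apply Real.exp_le_exp.2
  have hu := hplus (u := t/lam) (by positivity)
  have e1 : (1:ℝ) + t/lam = (lam+t)/lam := by rw [add_div, div_self hlam.ne']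
  rw [e1] at hu
  have hmul := mul_le_mul_of_nonneg_left hu hlam.le
  have i1 : lam * (3*(t/lam)^2/(2*(3+t/lam))) = 3*t^2/(2*(3*lam+t)) := by
    field_simp
  have i2 : lam * ((lam+t)/lam * θ - t/lam) = (lam+t)*θ - t := by
    field_simp
  rw [i1, i2] at hmul
  linarith

lemma chernoff_lower (lam t : ℝ) (ht : 0 < t) (hlt : t < lam) :
    (∑' k : ℕ, if (k : ℝ) ≤ lam - t
        then ENNReal.ofReal (Real.exp (-lam) * lam ^ k / (Nat.factorial k : ℝ)) else 0)
      ≤ ENNReal.ofReal (Real.exp (-(3 * t ^ 2 / (2 * (3 * lam - t))))) := by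
  have hlam : 0 < lam := lt_trans ht hlt
  have hlt0 : 0 < lam - t := by linarith
  set θ := Real.log (lam/(lam - t)) with hθdef
  have hfrac : (1:ℝ) ≤ lam/(lam - t) := by rw [le_div_iff₀ hlt0]; linarith
  have hθ0 : 0 ≤ θ := Real.log_nonneg hfrac
  have hexpθ : Real.exp (-θ) = (lam - t)/lam := by
    rw [Real.exp_neg, hθdef, Real.exp_log (by positivity), inv_div]
  set C := Real.exp (-lam + θ * (lam - t)) with hC
  have key : ∀ k : ℕ, (if (k:ℝ) ≤ lam - t
        then ENNReal.ofReal (Real.exp (-lam) * lam ^ k / (Nat.factorial k : ℝ)) else 0)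
      ≤ ENNReal.ofReal (C * ((lam - t) ^ k / (Nat.factorial k : ℝ))) := by
    intro k
    split_ifs with h
    · apply ENNReal.ofReal_le_ofReal
      have hpow : (lam - t)^k = lam^k * Real.exp (-θ) ^ k := by
        rw [hexpθ, div_pow, mul_div_cancel₀ _ (pow_ne_zero k hlam.ne')]
      have hle : Real.exp (-lam) ≤ Real.exp (-lam + θ*(lam-t) + k*(-θ)) := by
        apply Real.exp_le_exp.2
        nlinarith [mul_nonneg hθ0 (sub_nonneg.2 h)]
      calc Real.exp (-lam) * lam ^ k / (Nat.factorial k : ℝ)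
          ≤ Real.exp (-lam + θ*(lam-t) + k*(-θ)) * lam ^ k / (Nat.factorial k : ℝ) := by
            gcongr
        _ = C * ((lam - t) ^ k / (Nat.factorial k : ℝ)) := by
            rw [Real.exp_add, hC, hpow, ← Real.exp_nat_mul]
            ring
    · exact zero_le
  refine le_trans (ENNReal.tsum_le_tsum key) ?_
  have hsumm : Summable (fun k : ℕ => C * ((lam-t)^k / (Nat.factorial k : ℝ))) :=
    (Real.summable_pow_div_factorial (lam-t)).mul_left C
  rw [← ENNReal.ofReal_tsum_of_nonneg (fun k => by positivity) hsumm]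
  apply ENNReal.ofReal_le_ofReal
  rw [tsum_mul_left, tsum_exp', hC, ← Real.exp_add]
  apply Real.exp_le_exp.2
  have hu1 : t/lam < 1 := by rw [div_lt_one hlam]; exact hlt
  have hu := hminus (u := t/lam) (by positivity) hu1
  have e1 : (1:ℝ) - t/lam = (lam-t)/lam := by rw [sub_div, div_self hlam.ne']
  rw [e1] at hu
  have hlogeq : Real.log ((lam-t)/lam) = -θ := by
    rw [hθdef, ← Real.log_inv, inv_div]
  rw [hlogeq] at hu
  have hmul := mul_le_mul_of_nonneg_left hu hlam.le
  have hne : (3:ℝ)*lam - t ≠ 0 := by nlinarith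
  have hne2 : (3:ℝ) - t/lam ≠ 0 := by
    have : t/lam < 1 := hu1
    intro hcon; nlinarith
  have i1 : lam * (3*(t/lam)^2/(2*(3-t/lam))) = 3*t^2/(2*(3*lam-t)) := by
    field_simp
  have i2 : lam * ((lam-t)/lam * (-θ) + t/lam) = (lam-t)*(-θ) + t := by
    field_simp
  rw [i1, i2] at hmul
  linarith

set_option maxHeartbeats 2000000 in
theorem stmt8 (P : Measure Ω) [IsProbabilityMeasure P] (lam : ℝ) (hlam : 0 < lam)
    (n : ℕ) (hn : 2 ≤ n) (X : Ω → ℕ)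
    (hdist : ∀ k : ℕ, P {ω | X ω = k}
      = ENNReal.ofReal (Real.exp (-lam) * lam ^ k / (Nat.factorial k : ℝ))) :
    P {ω | max (Real.sqrt (5 * Real.log n * lam)) (5 * Real.log n) ≤ |(X ω : ℝ) - lam|}
      ≤ ENNReal.ofReal ((n : ℝ) ^ (-(5 : ℝ)/4)) := by
  have hn1 : (1:ℝ) < n := by exact_mod_cast lt_of_lt_of_le one_lt_two hn
  have hn0 : (0:ℝ) < n := by linarith
  set L := Real.log (n:ℝ) with hLdef
  have hL2 : Real.log 2 ≤ L := Real.log_le_log (by norm_num) (by exact_mod_cast hn)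
  have hLpos : 0 < L := Real.log_pos hn1
  have hexpL : Real.exp L = n := Real.exp_log hn0
  set t := max (Real.sqrt (5 * L * lam)) (5 * L) with htdef
  have ht5 : 5 * L ≤ t := le_max_right _ _
  have htpos : 0 < t := lt_of_lt_of_le (by positivity) ht5
  clear_value t
  clear_value L
  have hrpow : (n:ℝ) ^ (-(5:ℝ)/4) = Real.exp (L * (-(5:ℝ)/4)) := by
    rw [Real.rpow_def_of_pos hn0, ← hLdef]
  -- numeric exp bounds
  have hexp2 : ∀ k : ℕ, Real.exp (-(k:ℝ) * Real.log 2) = 1/2^k := by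
    intro k
    rw [show (-(k:ℝ) * Real.log 2) = -((k:ℝ) * Real.log 2) by ring, Real.exp_neg,
      Real.exp_nat_mul, Real.exp_log two_pos]
    norm_num
  have ha : Real.exp (-(5/8)*L) ≤ 13/20 := by
    apply le_of_pow_le_pow_left₀ (n := 8) (by norm_num) (by norm_num : (0:ℝ) ≤ 13/20)
    have h8 : Real.exp (-(5/8)*L) ^ (8:ℕ) = Real.exp (-(5:ℝ)*L) := by
      rw [← Real.exp_nat_mul]; congr 1; ring
    rw [h8]
    calc Real.exp (-(5:ℝ)*L) ≤ Real.exp (-(5:ℝ) * Real.log 2) := by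
          apply Real.exp_le_exp.2; nlinarith
      _ = 1/2^(5:ℕ) := by rw [← hexp2 5]; norm_num
      _ ≤ (13/20)^(8:ℕ) := by norm_num
  have hb : Real.exp (-(25/16)*L) ≤ 7/20 := by
    apply le_of_pow_le_pow_left₀ (n := 16) (by norm_num) (by norm_num : (0:ℝ) ≤ 7/20)
    have h16 : Real.exp (-(25/16)*L) ^ (16:ℕ) = Real.exp (-(25:ℝ)*L) := by
      rw [← Real.exp_nat_mul]; congr 1; ring
    rw [h16]
    calc Real.exp (-(25:ℝ)*L) ≤ Real.exp (-(25:ℝ) * Real.log 2) := by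
          apply Real.exp_le_exp.2; nlinarith
      _ = 1/2^(25:ℕ) := by rw [← hexp2 25]; norm_num
      _ ≤ (7/20)^(16:ℕ) := by norm_num
  have hcc : Real.exp (-(15/4)*L) ≤ 1/8 := by
    calc Real.exp (-(15/4)*L) ≤ Real.exp (-(3:ℝ) * Real.log 2) := by
          apply Real.exp_le_exp.2; nlinarith
      _ = 1/2^(3:ℕ) := by rw [← hexp2 3]; norm_num
      _ ≤ 1/8 := by norm_num
  have hdd : Real.exp (-L) ≤ 1/2 := by
    calc Real.exp (-L) ≤ Real.exp (-(1:ℝ) * Real.log 2) := by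
          apply Real.exp_le_exp.2; nlinarith
      _ = 1/2^(1:ℕ) := by rw [← hexp2 1]; norm_num
      _ ≤ 1/2 := by norm_num
  -- union bound
  have hsub : {ω | t ≤ |(X ω : ℝ) - lam|} ⊆
      ⋃ k : ℕ, (if t ≤ |(k:ℝ) - lam| then {ω | X ω = k} else ∅) := by
    intro ω hω
    simp only [Set.mem_setOf_eq] at hω
    exact Set.mem_iUnion.2 ⟨X ω, by rw [if_pos hω]; exact rfl⟩
  have step1 : P {ω | t ≤ |(X ω : ℝ) - lam|}
      ≤ (∑' k : ℕ, if lam + t ≤ (k:ℝ)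
            then ENNReal.ofReal (Real.exp (-lam) * lam ^ k / (Nat.factorial k : ℝ)) else 0)
        + (∑' k : ℕ, if (k:ℝ) ≤ lam - t
            then ENNReal.ofReal (Real.exp (-lam) * lam ^ k / (Nat.factorial k : ℝ)) else 0) := by
    refine le_trans (measure_mono hsub) (le_trans (measure_iUnion_le _) ?_)
    rw [← ENNReal.tsum_add]
    apply ENNReal.tsum_le_tsum
    intro k
    have hmeas : P (if t ≤ |(k:ℝ) - lam| then {ω | X ω = k} else ∅)
        = (if t ≤ |(k:ℝ) - lam|
            then ENNReal.ofReal (Real.exp (-lam) * lam ^ k / (Nat.factorial k : ℝ)) else 0) := by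
      split_ifs
      · exact hdist k
      · exact measure_empty
    rw [hmeas]
    by_cases h1 : t ≤ |(k:ℝ) - lam|
    · rw [if_pos h1]
      rcases le_abs.mp h1 with h | h
      · rw [if_pos (by linarith : lam + t ≤ (k:ℝ))]
        exact le_self_add
      · rw [if_pos (by linarith : (k:ℝ) ≤ lam - t)]
        exact le_add_self
    · rw [if_neg h1]
      exact zero_le
  refine le_trans step1 ?_
  clear step1 hsub hdist
  rcases le_or_gt lam (5*L) with hc5 | hc5
  · -- Case III : lam ≤ 5L, t = 5L
    have hteq : t = 5*L := by
      have h1 : Real.sqrt (5*L*lam) ≤ Real.sqrt ((5*L)^2) := Real.sqrt_le_sqrt (by nlinarith)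
      rw [Real.sqrt_sq (by positivity)] at h1
      rw [htdef]
      exact max_eq_right h1
    have hupexp : Real.exp (-(3*t^2/(2*(3*lam+t)))) ≤ Real.exp (-(15/8)*L) := by
      apply Real.exp_le_exp.2
      have h1 : (15/8)*L ≤ 3*t^2/(2*(3*lam+t)) := by
        rw [le_div_iff₀ (by positivity)]
        rw [hteq]
        nlinarith [hLpos.le, hlam.le]
      linarith
    have hlow : (∑' k : ℕ, if (k:ℝ) ≤ lam - t
            then ENNReal.ofReal (Real.exp (-lam) * lam ^ k / (Nat.factorial k : ℝ)) else 0)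
        ≤ ENNReal.ofReal (Real.exp (-(5*L))) := by
      refine le_trans (ENNReal.tsum_le_tsum (fun k => ?_))
        (le_of_eq (tsum_ite_eq (0:ℕ) (fun _ => ENNReal.ofReal (Real.exp (-(5*L))))))
      by_cases hk : (k:ℝ) ≤ lam - t
      · have hk0 : k = 0 := by
          have hknn : (0:ℝ) ≤ (k:ℝ) := Nat.cast_nonneg k
          have hkr : (k:ℝ) = 0 := le_antisymm (by rw [hteq] at hk; linarith) hknn
          exact_mod_cast hkr
        subst hk0
        rw [if_pos hk, if_pos rfl]
        apply ENNReal.ofReal_le_ofReal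
        simp only [pow_zero, Nat.factorial_zero, Nat.cast_one, mul_one]
        rw [div_one]
        apply Real.exp_le_exp.2
        rw [hteq] at hk
        simp only [Nat.cast_zero] at hk
        linarith
      · rw [if_neg hk]
        exact zero_le
    have hup := chernoff_upper lam t hlam htpos
    refine le_trans (add_le_add (le_trans hup (ENNReal.ofReal_le_ofReal hupexp)) hlow) ?_
    rw [← ENNReal.ofReal_add (by positivity) (by positivity)]
    apply ENNReal.ofReal_le_ofReal
    rw [hrpow]
    have e1 : Real.exp (-(15/8)*L) = Real.exp (-(5/8)*L) * Real.exp (L*(-(5:ℝ)/4)) := by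
      rw [← Real.exp_add]; congr 1; ring
    have e2 : Real.exp (-(5*L)) = Real.exp (-(15/4)*L) * Real.exp (L*(-(5:ℝ)/4)) := by
      rw [← Real.exp_add]; congr 1; ring
    have hcpos : 0 < Real.exp (L*(-(5:ℝ)/4)) := Real.exp_pos _
    rw [e1, e2]
    nlinarith [Real.exp_pos (-(5/8)*L), Real.exp_pos (-(15/4)*L)]
  · -- lam > 5L, t = sqrt(5 L lam)
    have hteq : t = Real.sqrt (5*L*lam) := by
      have h25 : (5*L)^2 ≤ 5*L*lam := by nlinarith
      have h1 := Real.sqrt_le_sqrt h25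
      rw [Real.sqrt_sq (by positivity)] at h1
      rw [htdef]
      exact max_eq_left h1
    have ht2 : t^2 = 5*L*lam := by rw [hteq, Real.sq_sqrt (by positivity)]
    have htlt : t < lam := by
      have hsq : t^2 < lam^2 := by
        rw [ht2, sq]
        exact mul_lt_mul_of_pos_right hc5 hlam
      exact lt_of_pow_lt_pow_left₀ 2 hlam.le hsq
    rcases le_or_gt lam (45*L) with hc45 | hc45
    · -- Case II
      have ht3 : lam/3 ≤ t := by
        have hsq : (lam/3)^2 ≤ t^2 := by rw [ht2]; nlinarith
        exact le_of_pow_le_pow_left₀ (by norm_num : (2:ℕ) ≠ 0) htpos.le hsq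
      have hupexp : Real.exp (-(3*t^2/(2*(3*lam+t)))) ≤ Real.exp (-(15/8)*L) := by
        apply Real.exp_le_exp.2
        have h1 : (15/8)*L ≤ 3*t^2/(2*(3*lam+t)) := by
          rw [le_div_iff₀ (by positivity), ht2]
          nlinarith [hLpos.le, htlt.le]
        linarith
      have hloexp : Real.exp (-(3*t^2/(2*(3*lam-t)))) ≤ Real.exp (-(45/16)*L) := by
        apply Real.exp_le_exp.2
        have h1 : (45/16)*L ≤ 3*t^2/(2*(3*lam-t)) := by
          rw [le_div_iff₀ (by nlinarith), ht2]
          nlinarith [hLpos.le]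
        linarith
      have hup := chernoff_upper lam t hlam htpos
      have hlo := chernoff_lower lam t htpos htlt
      refine le_trans (add_le_add (le_trans hup (ENNReal.ofReal_le_ofReal hupexp))
        (le_trans hlo (ENNReal.ofReal_le_ofReal hloexp))) ?_
      rw [← ENNReal.ofReal_add (by positivity) (by positivity)]
      apply ENNReal.ofReal_le_ofReal
      rw [hrpow]
      have e1 : Real.exp (-(15/8)*L) = Real.exp (-(5/8)*L) * Real.exp (L*(-(5:ℝ)/4)) := by
        rw [← Real.exp_add]; congr 1; ring
      have e2 : Real.exp (-(45/16)*L) = Real.exp (-(25/16)*L) * Real.exp (L*(-(5:ℝ)/4)) := by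
        rw [← Real.exp_add]; congr 1; ring
      have hcpos : 0 < Real.exp (L*(-(5:ℝ)/4)) := Real.exp_pos _
      rw [e1, e2]
      nlinarith [Real.exp_pos (-(5/8)*L), Real.exp_pos (-(25/16)*L)]
    · -- Case I
      have ht3 : t ≤ lam/3 := by
        have hsq : t^2 ≤ (lam/3)^2 := by rw [ht2]; nlinarith
        exact le_of_pow_le_pow_left₀ (by norm_num : (2:ℕ) ≠ 0) (by positivity) hsq
      have hupexp : Real.exp (-(3*t^2/(2*(3*lam+t)))) ≤ Real.exp (-(9/4)*L) := by
        apply Real.exp_le_exp.2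
        have h1 : (9/4)*L ≤ 3*t^2/(2*(3*lam+t)) := by
          rw [le_div_iff₀ (by positivity), ht2]
          nlinarith [hLpos.le]
        linarith
      have hloexp : Real.exp (-(3*t^2/(2*(3*lam-t)))) ≤ Real.exp (-(9/4)*L) := by
        apply Real.exp_le_exp.2
        have h1 : (9/4)*L ≤ 3*t^2/(2*(3*lam-t)) := by
          rw [le_div_iff₀ (by nlinarith), ht2]
          nlinarith [hLpos.le, htpos.le]
        linarith
      have hup := chernoff_upper lam t hlam htpos
      have hlo := chernoff_lower lam t htpos htlt
      refine le_trans (add_le_add (le_trans hup (ENNReal.ofReal_le_ofReal hupexp))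
        (le_trans hlo (ENNReal.ofReal_le_ofReal hloexp))) ?_
      rw [← ENNReal.ofReal_add (by positivity) (by positivity)]
      apply ENNReal.ofReal_le_ofReal
      rw [hrpow]
      have e1 : Real.exp (-(9/4)*L) = Real.exp (-L) * Real.exp (L*(-(5:ℝ)/4)) := by
        rw [← Real.exp_add]; congr 1; ring
      have hcpos : 0 < Real.exp (L*(-(5:ℝ)/4)) := Real.exp_pos _
      rw [e1]
      nlinarith [Real.exp_pos (-L)]


end
end
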